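/- arXiv:1310.6426 — 4 statements merged into one kernel-verified Lean document; each statement's English description precedes it below -/
import Mathlib

section
/- If I is a graded ideal of the polynomial ring S = K[x_1,...,x_n] generated by quadrics and β_{2,j}^S(S/I) ≠ 0 for some j > 4, then S/I is not a Koszul algebra (i.e., the residue field K does not have a linear free resolution over S/I). -/
open MvPolynomial

set_option synthInstance.maxHeartbeats 1000000
set_option maxHeartbeats 1000000

/-- The quotient `S/I` of a polynomial ring by a (homogeneous) ideal is *Koszul* if the
residue field `K = (S/I)/m` admits a free resolution whose differentials are given by
matrices all of whose entries are (images of) linear forms.  The first condition says that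
the image of the first differential is the maximal ideal `m` (generated by the variables),
i.e. the complex augments onto `K`; the second is exactness. -/
def IsKoszulQuot {K : Type*} [Field K] {σ : Type*} (I : Ideal (MvPolynomial σ K)) : Prop :=
  ∃ (b : ℕ → ℕ) (M : ∀ i, Matrix (Fin (b i)) (Fin (b (i + 1))) (MvPolynomial σ K ⧸ I)),
    b 0 = 1 ∧
    (∀ i k l, M i k l ∈ (Ideal.Quotient.mk I) '' {p : MvPolynomial σ K | p.IsHomogeneous 1}) ∧
    LinearMap.range (Matrix.toLin' (M 0)) =
      Submodule.pi Set.univ (fun _ : Fin (b 0) =>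
        (Ideal.map (Ideal.Quotient.mk I)
          (Ideal.span (Set.range (X : σ → MvPolynomial σ K))) :
            Ideal (MvPolynomial σ K ⧸ I))) ∧
    ∀ i, LinearMap.range (Matrix.toLin' (M (i + 1))) = LinearMap.ker (Matrix.toLin' (M i))

/-- A minimal graded free resolution of `S/I` over the polynomial ring `S`:
free modules with generators in prescribed internal degrees, differentials given by
homogeneous matrices of positive degree (minimality), exact, starting from
`F₀ = S → S/I → 0` (so the image of the first differential is `I`). -/
structure MinGradedFreeRes {K : Type*} [Field K] {σ : Type*}
    (I : Ideal (MvPolynomial σ K)) where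
  b : ℕ → ℕ
  deg : ∀ i, Fin (b i) → ℕ
  M : ∀ i, Matrix (Fin (b i)) (Fin (b (i + 1))) (MvPolynomial σ K)
  b_zero : b 0 = 1
  deg_zero : ∀ k, deg 0 k = 0
  homog : ∀ i k l, (M i k l).IsHomogeneous (deg (i + 1) l - deg i k)
  minimal : ∀ i k l, M i k l ≠ 0 → deg i k < deg (i + 1) l
  exact_zero : LinearMap.range (Matrix.toLin' (M 0)) =
    Submodule.pi Set.univ fun _ : Fin (b 0) => I
  exact_succ : ∀ i, LinearMap.range (Matrix.toLin' (M (i + 1))) =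
    LinearMap.ker (Matrix.toLin' (M i))

namespace KoszulAux

open MvPolynomial

variable {K : Type*} [Field K] {n : ℕ}


lemma hc_of_homog {p : MvPolynomial (Fin n) K} {c : ℕ} (h : p.IsHomogeneous c) :
    homogeneousComponent c p = p := by
  ext d
  rw [coeff_homogeneousComponent]
  split_ifs with hd
  · rfl
  · exact (h.coeff_eq_zero hd).symm

lemma hc_of_homog_ne {p : MvPolynomial (Fin n) K} {e c : ℕ} (h : p.IsHomogeneous e)
    (hne : c ≠ e) : homogeneousComponent c p = 0 := by
  ext d
  rw [coeff_homogeneousComponent]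
  split_ifs with hd
  · rw [h.coeff_eq_zero (by omega)]; simp
  · simp

lemma hc_mul {f : MvPolynomial (Fin n) K} {e : ℕ} (hf : f.IsHomogeneous e)
    (p : MvPolynomial (Fin n) K) (c : ℕ) :
    homogeneousComponent c (f * p) =
      if e ≤ c then f * homogeneousComponent (c - e) p else 0 := by
  induction p using MvPolynomial.induction_on' with
  | monomial u a =>
      have hm : ((monomial u) a).IsHomogeneous u.degree := isHomogeneous_monomial a rfl
      have hfm : (f * monomial u a).IsHomogeneous (e + u.degree) := hf.mul hm
      by_cases hce : c = e + u.degree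
      · subst hce
        rw [hc_of_homog hfm, if_pos (by omega),
          show e + u.degree - e = u.degree by omega, hc_of_homog hm]
      · rw [hc_of_homog_ne hfm hce]
        split_ifs with hle
        · rw [hc_of_homog_ne hm (by omega), mul_zero]
        · rfl
  | add p q hp hq =>
      rw [mul_add, map_add, hp, hq]
      split_ifs with hle
      · rw [map_add, mul_add]
      · rw [add_zero]

lemma cc_zero_of_homog_pos {p : MvPolynomial (Fin n) K} {c : ℕ} (h : p.IsHomogeneous c)
    (hc : 0 < c) : constantCoeff p = 0 := by
  have h0 : (0 : Fin n →₀ ℕ).degree ≠ c := by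
    rw [map_zero]; omega
  simpa [constantCoeff_eq] using h.coeff_eq_zero h0

lemma not_one_eq_sum {ι : Type*} (t : Finset ι) (f w : ι → MvPolynomial (Fin n) K)
    (h : ∀ m ∈ t, constantCoeff (f m) = 0) :
    (1 : MvPolynomial (Fin n) K) ≠ ∑ m ∈ t, f m * w m := by
  intro he
  have h2 := congrArg constantCoeff he
  rw [map_one, map_sum] at h2
  rw [Finset.sum_congr rfl (fun m hm => by rw [map_mul, h m hm, zero_mul])] at h2
  simp at h2

lemma deg_add (a b : Fin n →₀ ℕ) : (a + b).degree = a.degree + b.degree := by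
  have : (Finsupp.degree : (Fin n →₀ ℕ) → ℕ) = ⇑(Finsupp.weight 1) := by
    rw [Finsupp.degree_eq_weight_one]; rfl
  rw [this, map_add]

lemma deg_single (i : Fin n) : (Finsupp.single i (1:ℕ)).degree = 1 := by
  exact Finsupp.degree_single i 1

lemma single_add_tsub {α : Fin n →₀ ℕ} {i : Fin n} (hi : i ∈ α.support) :
    Finsupp.single i 1 + (α - Finsupp.single i 1) = α := by
  apply add_tsub_cancel_of_le
  rw [Finsupp.single_le_iff]
  exact Nat.one_le_iff_ne_zero.mpr (Finsupp.mem_support_iff.mp hi)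

lemma deg_tsub_single {α : Fin n →₀ ℕ} {i : Fin n} (hi : i ∈ α.support) :
    (α - Finsupp.single i 1).degree = α.degree - 1 := by
  have h := congrArg Finsupp.degree (single_add_tsub hi)
  rw [deg_add, deg_single] at h
  omega

lemma degree_eq_of_mem_support {p : MvPolynomial (Fin n) K} {c : ℕ}
    (hp : p.IsHomogeneous c) {α : Fin n →₀ ℕ} (hα : α ∈ p.support) : α.degree = c := by
  by_contra hne
  exact Finsupp.mem_support_iff.mp hα (hp.coeff_eq_zero hne)



lemma X_mul_monomialK (i : Fin n) (u : Fin n →₀ ℕ) (a : K) :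
    X i * monomial u a = monomial (Finsupp.single i 1 + u) a := by
  rw [X, monomial_mul, one_mul]

lemma exists_X_decomp {p : MvPolynomial (Fin n) K} {c : ℕ} (hp : p.IsHomogeneous c)
    (hc : 0 < c) :
    ∃ v : Fin n → MvPolynomial (Fin n) K,
      (∀ i, (v i).IsHomogeneous (c - 1)) ∧ p = ∑ i, X i * v i := by
  classical
  have hdeg : ∀ α ∈ p.support, α.degree = c := by
    intro α hα
    by_contra hne
    exact Finsupp.mem_support_iff.mp hα (hp.coeff_eq_zero hne)
  refine ⟨fun i => ∑ α ∈ p.support,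
      if α.support.min = (i : WithTop (Fin n)) then
        monomial (α - Finsupp.single i 1) (coeff α p) else 0, ?_, ?_⟩
  · intro i
    apply IsHomogeneous.sum
    intro α hα
    split_ifs with h
    · apply isHomogeneous_monomial
      have hi : i ∈ α.support := Finset.mem_of_min h
      have h2 := congrArg Finsupp.degree (single_add_tsub hi)
      rw [deg_add, deg_single] at h2
      have h4 := hdeg α hα
      omega
    · exact isHomogeneous_zero _ _ _
  · have step1 : ∀ i : Fin n, X i * (∑ α ∈ p.support,
        if α.support.min = (i : WithTop (Fin n)) then
          monomial (α - Finsupp.single i 1) (coeff α p) else 0)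
        = ∑ α ∈ p.support, (if α.support.min = (i : WithTop (Fin n)) then
            monomial α (coeff α p) else 0) := by
      intro i
      rw [Finset.mul_sum]
      apply Finset.sum_congr rfl
      intro α hα
      rw [mul_ite, mul_zero]
      split_ifs with h
      · rw [X_mul_monomialK, single_add_tsub (Finset.mem_of_min h)]
      · rfl
    calc p = ∑ α ∈ p.support, monomial α (coeff α p) := (support_sum_monomial_coeff p).symm
      _ = ∑ α ∈ p.support, ∑ i : Fin n, (if α.support.min = (i : WithTop (Fin n)) then
            monomial α (coeff α p) else 0) := by
          apply Finset.sum_congr rfl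
          intro α hα
          have hα0 : α ≠ 0 := by
            intro h0
            have := hdeg α hα
            rw [h0, map_zero] at this
            omega
          have hne : α.support.Nonempty := Finsupp.support_nonempty_iff.mpr hα0
          have hmin : α.support.min = ↑(α.support.min' hne) := (Finset.coe_min' hne).symm
          rw [Finset.sum_eq_single (α.support.min' hne)]
          · exact (if_pos hmin).symm
          · intro b _ hb
            rw [if_neg]
            intro hcon
            apply hb
            have h5 := hmin.symm.trans hcon
            exact (WithTop.coe_inj.mp h5).symm
          · intro h; exact absurd (Finset.mem_univ _) h
      _ = ∑ i : Fin n, ∑ α ∈ p.support, (if α.support.min = (i : WithTop (Fin n)) then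
            monomial α (coeff α p) else 0) := Finset.sum_comm
      _ = ∑ i, X i * _ := by
          apply Finset.sum_congr rfl
          intro i _
          rw [step1]


lemma finset_min_eq {s : Finset (Fin n)} {i : Fin n} (hi : i ∈ s)
    (hle : ∀ x ∈ s, i ≤ x) : s.min = (i : WithTop (Fin n)) := by
  apply le_antisymm (Finset.min_le hi)
  exact Finset.le_min (fun a ha => by exact_mod_cast hle a ha)

lemma min_le_of_mem {s : Finset (Fin n)} {i m : Fin n} (hi : i ∈ s)
    (hm : s.min = (m : WithTop (Fin n))) : m ≤ i := by
  have := Finset.min_le hi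
  rw [hm] at this
  exact WithTop.coe_le_coe.mp this

lemma koszul_syz (p : Fin n → MvPolynomial (Fin n) K)
    (hp : ∑ i, X i * p i = 0) :
    ∃ z : Fin n → Fin n → MvPolynomial (Fin n) K,
      (∀ i j, z i j = - z j i) ∧ (∀ i, z i i = 0) ∧
      ∀ i, p i = ∑ jj, X jj * z jj i := by
  classical
  set Zr : Fin n → Fin n → MvPolynomial (Fin n) K := fun m i =>
    ∑ α ∈ (p i).support,
      if (α.support.min = (m : WithTop (Fin n)) ∧ m < i) then
        monomial (α - Finsupp.single m 1) (coeff α (p i)) else 0 with hZr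
  have hyp : ∀ γ : Fin n →₀ ℕ, ∑ jj, coeff γ (X jj * p jj) = 0 := by
    intro γ
    rw [← coeff_sum, hp, coeff_zero]
  have coeff_Zr : ∀ (m i : Fin n) (δ : Fin n →₀ ℕ),
      coeff δ (Zr m i) =
        if ((δ + Finsupp.single m 1).support.min = (m : WithTop (Fin n)) ∧ m < i)
        then coeff (δ + Finsupp.single m 1) (p i) else 0 := by
    intro m i δ
    have hterm : ∀ α ∈ (p i).support,
        coeff δ (if (α.support.min = (m : WithTop (Fin n)) ∧ m < i) then
          monomial (α - Finsupp.single m 1) (coeff α (p i)) else 0)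
        = if (α.support.min = (m : WithTop (Fin n)) ∧ m < i ∧ α = δ + Finsupp.single m 1)
            then coeff α (p i) else 0 := by
      intro α _
      rw [apply_ite (coeff δ), coeff_monomial, coeff_zero]
      by_cases h1 : (α.support.min = (m : WithTop (Fin n)) ∧ m < i)
      · rw [if_pos h1]
        by_cases h2 : α - Finsupp.single m 1 = δ
        · rw [if_pos h2, if_pos ⟨h1.1, h1.2, by
            rw [← h2, add_comm, single_add_tsub (Finset.mem_of_min h1.1)]⟩]
        · rw [if_neg h2, if_neg]
          rintro ⟨-, -, h3⟩
          exact h2 (by rw [h3, add_tsub_cancel_right])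
      · rw [if_neg h1, if_neg]
        rintro ⟨ha, hb, -⟩
        exact h1 ⟨ha, hb⟩
    rw [hZr, coeff_sum, Finset.sum_congr rfl hterm]
    by_cases hcond : ((δ + Finsupp.single m 1).support.min = (m : WithTop (Fin n)) ∧ m < i)
    · rw [if_pos hcond]
      by_cases hmem : δ + Finsupp.single m 1 ∈ (p i).support
      · rw [Finset.sum_eq_single (δ + Finsupp.single m 1)]
        · rw [if_pos ⟨hcond.1, hcond.2, rfl⟩]
        · intro b _ hb
          rw [if_neg]
          rintro ⟨-, -, h⟩
          exact hb h
        · intro h; exact absurd hmem h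
      · rw [Finset.sum_eq_zero, (mem_support_iff.not_left.mp hmem)]
        intro b hb
        rw [if_neg]
        rintro ⟨-, -, h⟩
        rw [h] at hb
        exact hmem hb
    · rw [if_neg hcond, Finset.sum_eq_zero]
      intro b hb
      rw [if_neg]
      rintro ⟨h1, h2, h3⟩
      rw [h3] at h1
      exact hcond ⟨h1, h2⟩
  have hres : ∀ {β : Fin n →₀ ℕ} {jj : Fin n}, jj ∈ β.support →
      (β - Finsupp.single jj 1) + Finsupp.single jj 1 = β := by
    intro β jj h
    rw [add_comm]
    exact single_add_tsub h
  have key : ∀ (i : Fin n) (β : Fin n →₀ ℕ),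
      coeff β (p i) + (∑ jj, coeff β (X jj * Zr i jj)) = ∑ jj, coeff β (X jj * Zr jj i) := by
    intro i β
    by_cases hβ : β = 0
    · subst hβ
      have hz : ∀ (q : Fin n → MvPolynomial (Fin n) K) (jj : Fin n),
          coeff (0 : Fin n →₀ ℕ) (X jj * q jj) = 0 := by
        intro q jj
        rw [coeff_X_mul']
        simp
      rw [Finset.sum_eq_zero (fun jj _ => hz (Zr i) jj),
        Finset.sum_eq_zero (fun jj _ => hz (fun m => Zr m i) jj)]
      have h0 := hyp (Finsupp.single i 1)
      rw [Finset.sum_eq_single i] at h0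
      · rw [coeff_X_mul', if_pos (by simp), tsub_self] at h0
        simpa using h0
      · intro b _ hb
        rw [coeff_X_mul', if_neg]
        simp only [Finsupp.support_single_ne_zero _ (one_ne_zero), Finset.mem_singleton]
        exact hb
      · intro h; exact absurd (Finset.mem_univ _) h
    · have hne : β.support.Nonempty := Finsupp.support_nonempty_iff.mpr hβ
      set m0 := β.support.min' hne with hm0
      have hm0min : β.support.min = (m0 : WithTop (Fin n)) := (Finset.coe_min' hne).symm
      have hm0mem : m0 ∈ β.support := Finset.min'_mem _ hne
      have rhs_eq : ∑ jj, coeff β (X jj * Zr jj i)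
          = if m0 < i then coeff β (p i) else 0 := by
        have hterm : ∀ jj : Fin n, coeff β (X jj * Zr jj i)
            = if (jj ∈ β.support ∧ β.support.min = (jj : WithTop (Fin n)) ∧ jj < i)
              then coeff β (p i) else 0 := by
          intro jj
          rw [coeff_X_mul']
          by_cases hjj : jj ∈ β.support
          · rw [if_pos hjj, coeff_Zr, hres hjj]
            by_cases h2 : (β.support.min = (jj : WithTop (Fin n)) ∧ jj < i)
            · rw [if_pos h2, if_pos ⟨hjj, h2⟩]
            · rw [if_neg h2, if_neg (by rintro ⟨-, h⟩; exact h2 h)]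
          · rw [if_neg hjj, if_neg (by rintro ⟨h, -⟩; exact hjj h)]
        rw [Finset.sum_congr rfl (fun jj _ => hterm jj), Finset.sum_eq_single m0]
        · by_cases hlt : m0 < i
          · rw [if_pos ⟨hm0mem, hm0min, hlt⟩, if_pos hlt]
          · rw [if_neg (by rintro ⟨-, -, h⟩; exact hlt h), if_neg hlt]
        · intro b _ hb
          rw [if_neg]
          rintro ⟨-, hmin, -⟩
          exact hb (WithTop.coe_inj.mp (hm0min.symm.trans hmin)).symm
        · intro h; exact absurd (Finset.mem_univ _) h
      have lhs_term : ∀ jj : Fin n, coeff β (X jj * Zr i jj)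
          = if (jj ∈ β.support ∧ ((β - Finsupp.single jj 1 + Finsupp.single i 1).support.min
              = (i : WithTop (Fin n)) ∧ i < jj))
            then coeff (β - Finsupp.single jj 1 + Finsupp.single i 1) (p jj) else 0 := by
        intro jj
        rw [coeff_X_mul']
        by_cases hjj : jj ∈ β.support
        · rw [if_pos hjj, coeff_Zr]
          by_cases h2 : ((β - Finsupp.single jj 1 + Finsupp.single i 1).support.min
              = (i : WithTop (Fin n)) ∧ i < jj)
          · rw [if_pos h2, if_pos ⟨hjj, h2⟩]
          · rw [if_neg h2, if_neg (by rintro ⟨-, h⟩; exact h2 h)]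
        · rw [if_neg hjj, if_neg (by rintro ⟨h, -⟩; exact hjj h)]
      by_cases hlt : m0 < i
      · rw [rhs_eq, if_pos hlt]
        have hz : ∀ jj : Fin n, coeff β (X jj * Zr i jj) = 0 := by
          intro jj
          rw [lhs_term, if_neg]
          rintro ⟨hjj, hmin, hij⟩
          have hji : jj ≠ m0 := fun h => by
            rw [h] at hij
            exact absurd (lt_trans hlt hij) (lt_irrefl _)
          have him : i ≠ m0 := fun h => by rw [h] at hlt; exact lt_irrefl _ hlt
          have hm0' : m0 ∈ (β - Finsupp.single jj 1 + Finsupp.single i 1).support := by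
            rw [Finsupp.mem_support_iff, Finsupp.add_apply, Finsupp.tsub_apply,
              Finsupp.single_apply, Finsupp.single_apply, if_neg hji, if_neg him]
            have := Finsupp.mem_support_iff.mp hm0mem
            omega
          have := min_le_of_mem hm0' hmin
          exact absurd this (not_le.mpr hlt)
        rw [Finset.sum_eq_zero (fun jj _ => hz jj), add_zero]
      · rw [rhs_eq, if_neg hlt]
        have hile : i ≤ m0 := not_lt.mp hlt
        have h0 := hyp (β + Finsupp.single i 1)
        rw [Finset.sum_congr rfl (fun jj _ => by rw [coeff_X_mul'])] at h0
        have hmemi : i ∈ (β + Finsupp.single i 1).support := by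
          rw [Finsupp.mem_support_iff, Finsupp.add_apply, Finsupp.single_apply, if_pos rfl]
          omega
        have h0termi : (if i ∈ (β + Finsupp.single i 1).support then
            coeff (β + Finsupp.single i 1 - Finsupp.single i 1) (p i) else 0) = coeff β (p i) := by
          rw [if_pos hmemi, add_tsub_cancel_right]
        have swap_eq : ∀ {jj : Fin n}, jj ∈ β.support → jj ≠ i →
            (β - Finsupp.single jj 1 + Finsupp.single i 1)
              = (β + Finsupp.single i 1 - Finsupp.single jj 1) := by
          intro jj hjj hnei
          have hjk : 1 ≤ β jj := Nat.one_le_iff_ne_zero.mpr (Finsupp.mem_support_iff.mp hjj)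
          ext k
          rw [Finsupp.add_apply, Finsupp.tsub_apply, Finsupp.tsub_apply, Finsupp.add_apply,
            Finsupp.single_apply, Finsupp.single_apply]
          rcases eq_or_ne jj k with h1 | h1
          · subst h1
            rw [if_pos rfl, if_neg (fun h => hnei h.symm)]
            omega
          · rw [if_neg h1]
            rcases eq_or_ne i k with h2 | h2
            · rw [if_pos h2]; omega
            · rw [if_neg h2]; omega
        have hmatch : ∀ jj : Fin n, jj ≠ i →
            coeff β (X jj * Zr i jj) = (if jj ∈ (β + Finsupp.single i 1).support then
              coeff (β + Finsupp.single i 1 - Finsupp.single jj 1) (p jj) else 0) := by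
          intro jj hnei
          rw [lhs_term]
          by_cases hjj : jj ∈ β.support
          · have hij : i < jj := lt_of_le_of_ne (le_trans hile (min_le_of_mem hjj hm0min))
              (Ne.symm hnei)
            have hmin : (β - Finsupp.single jj 1 + Finsupp.single i 1).support.min
                = (i : WithTop (Fin n)) := by
              apply finset_min_eq
              · rw [Finsupp.mem_support_iff, Finsupp.add_apply, Finsupp.tsub_apply,
                  Finsupp.single_apply, Finsupp.single_apply, if_pos rfl]
                omega
              · intro x hx
                rcases eq_or_ne i x with h2 | h2
                · exact le_of_eq h2
                · rw [Finsupp.mem_support_iff, Finsupp.add_apply, Finsupp.tsub_apply,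
                    Finsupp.single_apply, Finsupp.single_apply, if_neg h2, add_zero] at hx
                  have hxb : x ∈ β.support := by
                    rw [Finsupp.mem_support_iff]
                    intro h
                    rw [h] at hx
                    simp at hx
                  exact le_trans hile (min_le_of_mem hxb hm0min)
            rw [if_pos ⟨hjj, hmin, hij⟩, swap_eq hjj hnei]
            rw [if_pos (by
              rw [Finsupp.mem_support_iff, Finsupp.add_apply, Finsupp.single_apply,
                if_neg (fun h => hnei h.symm)]
              simpa using Finsupp.mem_support_iff.mp hjj)]
          · rw [if_neg (by rintro ⟨h, -⟩; exact hjj h), if_neg]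
            rw [Finsupp.mem_support_iff, Finsupp.add_apply, Finsupp.single_apply,
              if_neg (fun h => hnei h.symm), add_zero]
            simpa using (Finsupp.mem_support_iff.not_left.mp hjj)
        rw [Finset.sum_eq_sum_sdiff_singleton_add (Finset.mem_univ i)] at h0 ⊢
        have hlhsi : coeff β (X i * Zr i i) = 0 := by
          rw [lhs_term, if_neg (by rintro ⟨-, -, h⟩; exact lt_irrefl _ h)]
        rw [hlhsi, add_zero]
        rw [Finset.sum_congr rfl (fun jj hjj => hmatch jj (by
          rw [Finset.mem_sdiff, Finset.mem_singleton] at hjj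
          exact hjj.2))]
        rw [h0termi] at h0
        rw [add_comm]
        exact h0
  refine ⟨fun i j => Zr i j - Zr j i, fun i j => (neg_sub _ _).symm, fun i => sub_self _, ?_⟩
  intro i
  apply MvPolynomial.ext
  intro β
  rw [coeff_sum]
  rw [Finset.sum_congr rfl (fun jj _ => by rw [mul_sub, coeff_sub])]
  rw [Finset.sum_sub_distrib]
  exact eq_sub_of_add_eq (key i β)

lemma homog_neg {p : MvPolynomial (Fin n) K} {c : ℕ} (h : p.IsHomogeneous c) :
    (-p).IsHomogeneous c := by
  rw [← mem_homogeneousSubmodule] at h ⊢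
  exact neg_mem h

lemma homog_sub {p q : MvPolynomial (Fin n) K} {c : ℕ} (hp : p.IsHomogeneous c)
    (hq : q.IsHomogeneous c) : (p - q).IsHomogeneous c := by
  rw [← mem_homogeneousSubmodule] at hp hq ⊢
  exact sub_mem hp hq

lemma homog_add {p q : MvPolynomial (Fin n) K} {c : ℕ} (hp : p.IsHomogeneous c)
    (hq : q.IsHomogeneous c) : (p + q).IsHomogeneous c := by
  rw [← mem_homogeneousSubmodule] at hp hq ⊢
  exact add_mem hp hq

/-- The antisymmetric pairing lemma: `∑ᵢⱼ Xᵢ Xⱼ aᵢⱼ = 0` for alternating `a`. -/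
lemma sum_alt_zero (a : Fin n → Fin n → MvPolynomial (Fin n) K)
    (hskew : ∀ i j, a i j = - a j i) (hdiag : ∀ i, a i i = 0) :
    ∑ i, X i * (∑ j, X j * a j i) = 0 := by
  have h1 : ∑ i, X i * (∑ j, X j * a j i) = ∑ p ∈ (Finset.univ ×ˢ Finset.univ),
      (X p.1 * (X p.2 * a p.2 p.1)) := by
    rw [Finset.sum_product]
    exact Finset.sum_congr rfl (fun i _ => by rw [Finset.mul_sum])
  rw [h1]
  apply Finset.sum_involution (fun p _ => (p.2, p.1))
  · intro p _
    rcases eq_or_ne p.1 p.2 with h | h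
    · rw [← h, hdiag]
      ring
    · rw [hskew p.2 p.1]
      ring
  · intro p _ hne h
    apply hne
    have h2 : p.2 = p.1 := congrArg Prod.fst h
    rw [h2, hdiag, mul_zero, mul_zero]
  · intro p _; exact Finset.mem_univ _
  · intro p _; rfl

section IdealSec

variable {I : Ideal (MvPolynomial (Fin n) K)} {Q : Set (MvPolynomial (Fin n) K)}

/-- decomposition of homogeneous ideal elements over the quadric generators. -/
lemma ideal_decompQ (hQI : I = Ideal.span Q) (hQ2 : ∀ q ∈ Q, q.IsHomogeneous 2)
    {f : MvPolynomial (Fin n) K} {c : ℕ} (hf : f ∈ I) (hfc : f.IsHomogeneous c) :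
    ∃ (t : Finset (MvPolynomial (Fin n) K)) (φ : MvPolynomial (Fin n) K → MvPolynomial (Fin n) K),
      (∀ q ∈ t, q ∈ I ∧ q.IsHomogeneous 2) ∧ (∀ q ∈ t, (φ q).IsHomogeneous (c - 2)) ∧
      f = ∑ q ∈ t, φ q * q ∧ (c < 2 → f = 0) := by
  classical
  have hf' := hf
  rw [hQI] at hf'
  obtain ⟨co, hsub, hsum⟩ := Submodule.mem_span_set.mp hf'
  have hrep : f = ∑ q ∈ co.support, co q * q := by
    rw [← hsum]
    rfl
  have hcomp : f = ∑ q ∈ co.support,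
      (if 2 ≤ c then homogeneousComponent (c - 2) (co q) * q else 0) := by
    conv_lhs => rw [← hc_of_homog hfc, hrep]
    rw [map_sum]
    apply Finset.sum_congr rfl
    intro q hq
    rw [mul_comm, hc_mul (hQ2 q (hsub hq))]
    split_ifs with h
    · rw [mul_comm]
    · rfl
  refine ⟨co.support, fun q => if 2 ≤ c then homogeneousComponent (c - 2) (co q) else 0,
    ?_, ?_, ?_, ?_⟩
  · intro q hq
    exact ⟨hQI ▸ Ideal.subset_span (hsub hq), hQ2 q (hsub hq)⟩
  · intro q hq
    split_ifs with h
    · exact homogeneousComponent_isHomogeneous _ _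
    · exact isHomogeneous_zero _ _ _
  · rw [hcomp]
    apply Finset.sum_congr rfl
    intro q hq
    split_ifs with h
    · rfl
    · rw [zero_mul]
  · intro hlt
    rw [hcomp, Finset.sum_congr rfl (fun q _ => if_neg (by omega)), Finset.sum_const_zero]

/-- homogeneous components of ideal elements stay in the ideal. -/
lemma ideal_hc (hQI : I = Ideal.span Q) (hQ2 : ∀ q ∈ Q, q.IsHomogeneous 2)
    {f : MvPolynomial (Fin n) K} (hf : f ∈ I) (c : ℕ) :
    homogeneousComponent c f ∈ I := by
  classical
  have hf' := hf
  rw [hQI] at hf'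
  obtain ⟨co, hsub, hsum⟩ := Submodule.mem_span_set.mp hf'
  have hrep : f = ∑ q ∈ co.support, co q * q := by
    rw [← hsum]
    rfl
  rw [hrep, map_sum]
  apply Ideal.sum_mem
  intro q hq
  rw [mul_comm, hc_mul (hQ2 q (hsub hq))]
  split_ifs with h
  · exact Ideal.mul_mem_right _ _ (hQI ▸ Ideal.subset_span (hsub hq))
  · exact Ideal.zero_mem _

/-- homogeneous ideal elements of degree `< 2` vanish. -/
lemma ideal_low (hQI : I = Ideal.span Q) (hQ2 : ∀ q ∈ Q, q.IsHomogeneous 2)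
    {f : MvPolynomial (Fin n) K} {c : ℕ} (hf : f ∈ I) (hfc : f.IsHomogeneous c)
    (hc2 : c < 2) : f = 0 := by
  obtain ⟨-, -, -, -, -, h⟩ := ideal_decompQ hQI hQ2 hf hfc
  exact h hc2

end IdealSec

lemma toLin'_coord {R : Type*} [CommRing R] {a b : ℕ} (A : Matrix (Fin a) (Fin b) R)
    (v : Fin b → R) (i : Fin a) : Matrix.toLin' A v i = ∑ c, A i c * v c := by
  rw [Matrix.toLin'_apply]
  rfl

section FSide

variable {I : Ideal (MvPolynomial (Fin n) K)} {Q : Set (MvPolynomial (Fin n) K)}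

/-- the unique index of `Fin (F.b 0)`. -/
def iz (F : MinGradedFreeRes I) : Fin (F.b 0) := ⟨0, by rw [F.b_zero]; omega⟩

lemma iz_unique (F : MinGradedFreeRes I) (a : Fin (F.b 0)) : a = iz F := by
  apply Fin.ext
  show (a : ℕ) = 0
  have h2 : (a : ℕ) < 1 := by simpa [F.b_zero] using a.isLt
  omega

variable (F : MinGradedFreeRes I)

lemma g_homog (l : Fin (F.b 1)) : (F.M 0 (iz F) l).IsHomogeneous (F.deg 1 l) := by
  have h := F.homog 0 (iz F) l
  rwa [F.deg_zero, Nat.sub_zero] at h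

lemma mem_I_of_rep (v : Fin (F.b 1) → MvPolynomial (Fin n) K) :
    (∑ l, F.M 0 (iz F) l * v l) ∈ I := by
  have h : Matrix.toLin' (F.M 0) v ∈ LinearMap.range (Matrix.toLin' (F.M 0)) := ⟨v, rfl⟩
  rw [F.exact_zero] at h
  have h2 := Submodule.mem_pi.mp h (iz F) (Set.mem_univ _)
  rwa [toLin'_coord] at h2

lemma rep_of_mem_I {f : MvPolynomial (Fin n) K} (hf : f ∈ I) :
    ∃ v : Fin (F.b 1) → MvPolynomial (Fin n) K, f = ∑ l, F.M 0 (iz F) l * v l := by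
  have h : (fun _ : Fin (F.b 0) => f) ∈ Submodule.pi Set.univ (fun _ : Fin (F.b 0) => I) := by
    rw [Submodule.mem_pi]
    intro i _
    exact hf
  rw [← F.exact_zero] at h
  obtain ⟨v, hv⟩ := h
  refine ⟨v, ?_⟩
  have h2 := congrFun hv (iz F)
  rw [toLin'_coord] at h2
  exact h2.symm

lemma g_mem_I (l : Fin (F.b 1)) : F.M 0 (iz F) l ∈ I := by
  have h := mem_I_of_rep F (Pi.single l 1)
  rwa [Finset.sum_eq_single l
    (fun b _ hb => by rw [Pi.single_eq_of_ne hb, mul_zero])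
    (fun hl => absurd (Finset.mem_univ _) hl), Pi.single_eq_same, mul_one] at h

lemma row_unit_contra {i : ℕ} (k : Fin (F.b (i+1))) (w : Fin (F.b (i+2)) → MvPolynomial (Fin n) K)
    (h : (1 : MvPolynomial (Fin n) K) = ∑ m, F.M (i+1) k m * w m) : False := by
  refine not_one_eq_sum Finset.univ _ w ?_ h
  intro m _
  by_cases hz : F.M (i+1) k m = 0
  · rw [hz, map_zero]
  · exact cc_zero_of_homog_pos (F.homog (i+1) k m)
      (by have := F.minimal (i+1) k m hz; omega)

/-- a homogeneous syzygy-free statement: membership of a vector in the kernel of `M 0`. -/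
lemma mem_ker0_iff (v : Fin (F.b 1) → MvPolynomial (Fin n) K) :
    v ∈ LinearMap.ker (Matrix.toLin' (F.M 0)) ↔ ∑ l, F.M 0 (iz F) l * v l = 0 := by
  rw [LinearMap.mem_ker]
  constructor
  · intro h
    have h2 := congrFun h (iz F)
    rwa [toLin'_coord] at h2
  · intro h
    funext a
    rw [toLin'_coord, iz_unique F a]
    exact h

lemma g_ne_zero (l : Fin (F.b 1)) : F.M 0 (iz F) l ≠ 0 := by
  intro hz
  have hker : Pi.single l 1 ∈ LinearMap.ker (Matrix.toLin' (F.M 0)) := by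
    rw [mem_ker0_iff]
    rw [Finset.sum_eq_single l
      (fun b _ hb => by rw [Pi.single_eq_of_ne hb, mul_zero])
      (fun hl => absurd (Finset.mem_univ _) hl), Pi.single_eq_same, mul_one]
    exact hz
  rw [← F.exact_succ 0] at hker
  obtain ⟨w, hw⟩ := hker
  have h2 := congrFun hw l
  rw [toLin'_coord, Pi.single_eq_same] at h2
  exact row_unit_contra F (i := 0) l w h2.symm

variable (hQI : I = Ideal.span Q) (hQ2 : ∀ q ∈ Q, q.IsHomogeneous 2)
include hQI hQ2

lemma d1_ge (l : Fin (F.b 1)) : 2 ≤ F.deg 1 l := by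
  by_contra h
  exact g_ne_zero F l (ideal_low hQI hQ2 (g_mem_I F l) (g_homog F l) (by omega))

omit hQI hQ2

/-- graded representation of homogeneous ideal elements over the resolution generators. -/
lemma graded_rep {f : MvPolynomial (Fin n) K} {c : ℕ} (hf : f ∈ I) (hfc : f.IsHomogeneous c) :
    ∃ v : Fin (F.b 1) → MvPolynomial (Fin n) K,
      (∀ l, (v l).IsHomogeneous (c - F.deg 1 l)) ∧ (∀ l, c < F.deg 1 l → v l = 0) ∧
      f = ∑ l, F.M 0 (iz F) l * v l := by
  classical
  obtain ⟨w, hw⟩ := rep_of_mem_I F hf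
  refine ⟨fun l => if F.deg 1 l ≤ c then homogeneousComponent (c - F.deg 1 l) (w l) else 0,
    ?_, ?_, ?_⟩
  · intro l
    dsimp only
    split_ifs with h
    · exact homogeneousComponent_isHomogeneous _ _
    · exact isHomogeneous_zero _ _ _
  · intro l hl
    dsimp only
    rw [if_neg (by omega)]
  · dsimp only
    conv_lhs => rw [← hc_of_homog hfc, hw]
    rw [map_sum]
    apply Finset.sum_congr rfl
    intro l _
    rw [hc_mul (g_homog F l), mul_ite, mul_zero]

end FSide

section FSide2

variable {I : Ideal (MvPolynomial (Fin n) K)} {Q : Set (MvPolynomial (Fin n) K)}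
variable (F : MinGradedFreeRes I)
variable (hQI : I = Ideal.span Q) (hQ2 : ∀ q ∈ Q, q.IsHomogeneous 2)
include hQI hQ2

lemma d1_eq (l : Fin (F.b 1)) : F.deg 1 l = 2 := by
  classical
  by_contra hne
  have h3 : 3 ≤ F.deg 1 l := by
    have := d1_ge F hQI hQ2 l
    omega
  obtain ⟨t, φ, hts, hφ, hrep, -⟩ := ideal_decompQ hQI hQ2 (g_mem_I F l) (g_homog F l)
  have hch : ∀ q : MvPolynomial (Fin n) K, ∃ vq : Fin (F.b 1) → MvPolynomial (Fin n) K,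
      q ∈ t → ((∀ l', 2 < F.deg 1 l' → vq l' = 0) ∧ q = ∑ l', F.M 0 (iz F) l' * vq l') := by
    intro q
    by_cases hq : q ∈ t
    · obtain ⟨vq, _, h2, h3'⟩ := graded_rep F (hts q hq).1 (hts q hq).2
      exact ⟨vq, fun _ => ⟨h2, h3'⟩⟩
    · exact ⟨0, fun h => absurd h hq⟩
  choose vq hvq using hch
  set w : Fin (F.b 1) → MvPolynomial (Fin n) K := fun l' => ∑ q ∈ t, φ q * vq q l' with hwdef
  have hwl : w l = 0 := by
    rw [hwdef]
    apply Finset.sum_eq_zero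
    intro q hq
    rw [(hvq q hq).1 l (by omega), mul_zero]
  have hgw : F.M 0 (iz F) l = ∑ l', F.M 0 (iz F) l' * w l' := by
    rw [hrep]
    calc ∑ q ∈ t, φ q * q = ∑ q ∈ t, ∑ l', φ q * (F.M 0 (iz F) l' * vq q l') := by
          apply Finset.sum_congr rfl
          intro q hq
          rw [← Finset.mul_sum, ← (hvq q hq).2]
      _ = ∑ l', ∑ q ∈ t, φ q * (F.M 0 (iz F) l' * vq q l') := Finset.sum_comm
      _ = ∑ l', F.M 0 (iz F) l' * w l' := by
          apply Finset.sum_congr rfl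
          intro l' _
          rw [hwdef, Finset.mul_sum]
          apply Finset.sum_congr rfl
          intro q _
          ring
  have hker : ((Pi.single l 1 : Fin (F.b 1) → MvPolynomial (Fin n) K) - w) ∈
      LinearMap.ker (Matrix.toLin' (F.M 0)) := by
    rw [mem_ker0_iff]
    have hsplit : ∀ l' : Fin (F.b 1), F.M 0 (iz F) l' *
        ((Pi.single l 1 : Fin (F.b 1) → MvPolynomial (Fin n) K) - w) l'
        = F.M 0 (iz F) l' * (Pi.single l 1 : Fin (F.b 1) → MvPolynomial (Fin n) K) l'
          - F.M 0 (iz F) l' * w l' := by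
      intro l'
      rw [Pi.sub_apply, mul_sub]
    rw [Finset.sum_congr rfl (fun l' _ => hsplit l'), Finset.sum_sub_distrib,
      Finset.sum_eq_single l (fun b _ hb => by rw [Pi.single_eq_of_ne hb, mul_zero])
        (fun hl => absurd (Finset.mem_univ _) hl), Pi.single_eq_same, mul_one, ← hgw, sub_self]
  rw [← F.exact_succ 0] at hker
  obtain ⟨ω, hω⟩ := hker
  have h2 := congrFun hω l
  rw [toLin'_coord] at h2
  rw [Pi.sub_apply, Pi.single_eq_same, hwl, sub_zero] at h2
  exact row_unit_contra F (i := 0) l ω h2.symm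

lemma M1_homog (l : Fin (F.b 1)) (m : Fin (F.b 2)) :
    (F.M 1 l m).IsHomogeneous (F.deg 2 m - 2) := by
  have h := F.homog 1 l m
  rwa [d1_eq F hQI hQ2 l] at h

lemma syz_decomp_M1 {u : ℕ} {s : Fin (F.b 1) → MvPolynomial (Fin n) K}
    (hhom : ∀ l, (s l).IsHomogeneous (u - 2))
    (hs : ∑ l, F.M 0 (iz F) l * s l = 0) :
    ∃ h : Fin (F.b 2) → MvPolynomial (Fin n) K,
      (∀ m, u - 2 < F.deg 2 m - 2 → h m = 0) ∧
      ∀ l, s l = ∑ m, F.M 1 l m * h m := by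
  classical
  have hker : s ∈ LinearMap.ker (Matrix.toLin' (F.M 0)) := (mem_ker0_iff F s).mpr hs
  rw [← F.exact_succ 0] at hker
  obtain ⟨w, hw⟩ := hker
  refine ⟨fun m => if F.deg 2 m - 2 ≤ u - 2 then
    homogeneousComponent ((u - 2) - (F.deg 2 m - 2)) (w m) else 0, ?_, ?_⟩
  · intro m hm
    dsimp only
    rw [if_neg (by omega)]
  · intro l
    have hl : s l = ∑ m, F.M 1 l m * w m := by
      have h2 := congrFun hw l
      rw [toLin'_coord] at h2
      exact h2.symm
    conv_lhs => rw [← hc_of_homog (hhom l), hl]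
    rw [map_sum]
    apply Finset.sum_congr rfl
    intro m _
    rw [hc_mul (M1_homog F hQI hQ2 l m), mul_ite, mul_zero]

end FSide2

lemma homog_cast {p : MvPolynomial (Fin n) K} {c c' : ℕ} (h : p.IsHomogeneous c)
    (e : c = c') : p.IsHomogeneous c' := e ▸ h

lemma homog_X_mul {p : MvPolynomial (Fin n) K} {c : ℕ} (i : Fin n)
    (h : p.IsHomogeneous c) : (X i * p).IsHomogeneous (c + 1) :=
  homog_cast ((isHomogeneous_X K i).mul h) (by omega)

section KSide

variable {I : Ideal (MvPolynomial (Fin n) K)} {Q : Set (MvPolynomial (Fin n) K)}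

/-- bundled Koszul data. -/
structure KoszulData (I : Ideal (MvPolynomial (Fin n) K)) where
  b : ℕ → ℕ
  M : ∀ i, Matrix (Fin (b i)) (Fin (b (i + 1))) (MvPolynomial (Fin n) K ⧸ I)
  b_zero : b 0 = 1
  lin : ∀ i k l, M i k l ∈ (Ideal.Quotient.mk I) '' {p : MvPolynomial (Fin n) K | p.IsHomogeneous 1}
  range0 : LinearMap.range (Matrix.toLin' (M 0)) =
    Submodule.pi Set.univ (fun _ : Fin (b 0) =>
      (Ideal.map (Ideal.Quotient.mk I)
        (Ideal.span (Set.range (X : Fin n → MvPolynomial (Fin n) K))) :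
          Ideal (MvPolynomial (Fin n) K ⧸ I)))
  exact : ∀ i, LinearMap.range (Matrix.toLin' (M (i + 1))) = LinearMap.ker (Matrix.toLin' (M i))

variable (D : KoszulData (I := I))

/-- lifted matrices with linear homogeneous entries. -/
noncomputable def KoszulData.L (p : ℕ) (a : Fin (D.b p)) (c : Fin (D.b (p+1))) :
    MvPolynomial (Fin n) K :=
  ((Set.mem_image _ _ _).mp (D.lin p a c)).choose

lemma KoszulData.L_homog (p : ℕ) (a : Fin (D.b p)) (c : Fin (D.b (p+1))) :
    (D.L p a c).IsHomogeneous 1 :=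
  ((Set.mem_image _ _ _).mp (D.lin p a c)).choose_spec.1

lemma KoszulData.L_mk (p : ℕ) (a : Fin (D.b p)) (c : Fin (D.b (p+1))) :
    Ideal.Quotient.mk I (D.L p a c) = D.M p a c :=
  ((Set.mem_image _ _ _).mp (D.lin p a c)).choose_spec.2

/-- the unique index of `Fin (D.b 0)`. -/
def KoszulData.iz : Fin (D.b 0) := ⟨0, by rw [D.b_zero]; omega⟩

lemma KoszulData.iz_unique (a : Fin (D.b 0)) : a = D.iz := by
  apply Fin.ext
  show (a : ℕ) = 0
  have h2 : (a : ℕ) < 1 := by simpa [D.b_zero] using a.isLt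
  omega

lemma kcomplex (p : ℕ) (a : Fin (D.b p)) (e : Fin (D.b (p+2))) :
    (∑ c, D.L p a c * D.L (p+1) c e) ∈ I := by
  rw [← Ideal.Quotient.eq_zero_iff_mem, map_sum]
  have hcol : (fun c => D.M (p+1) c e) ∈ LinearMap.ker (Matrix.toLin' (D.M p)) := by
    rw [← D.exact p]
    refine ⟨Pi.single e 1, ?_⟩
    funext c
    rw [toLin'_coord, Finset.sum_eq_single e
      (fun b _ hb => by rw [Pi.single_eq_of_ne hb, mul_zero])
      (fun hl => absurd (Finset.mem_univ _) hl), Pi.single_eq_same, mul_one]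
  have h2 := congrFun (LinearMap.mem_ker.mp hcol) a
  rw [toLin'_coord] at h2
  rw [Finset.sum_congr rfl (fun c _ => by rw [map_mul, D.L_mk, D.L_mk])]
  exact h2

lemma kcomplex_homog (p : ℕ) (a : Fin (D.b p)) (e : Fin (D.b (p+2))) :
    (∑ c, D.L p a c * D.L (p+1) c e).IsHomogeneous 2 :=
  IsHomogeneous.sum _ _ _ (fun c _ => (D.L_homog p a c).mul (D.L_homog (p+1) c e))

lemma kexact (p : ℕ) (V : Fin (D.b (p+1)) → MvPolynomial (Fin n) K)
    (hV : ∀ a, ∑ c, D.M p a c * Ideal.Quotient.mk I (V c) = 0) :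
    ∃ W : Fin (D.b (p+2)) → MvPolynomial (Fin n) K,
      ∀ c, V c - ∑ e, D.L (p+1) c e * W e ∈ I := by
  have hker : (fun c => Ideal.Quotient.mk I (V c)) ∈ LinearMap.ker (Matrix.toLin' (D.M p)) := by
    rw [LinearMap.mem_ker]
    funext a
    rw [toLin'_coord]
    exact hV a
  rw [← D.exact p] at hker
  obtain ⟨wb, hwb⟩ := hker
  have hlift : ∀ e, ∃ x : MvPolynomial (Fin n) K, Ideal.Quotient.mk I x = wb e :=
    fun e => Ideal.Quotient.mk_surjective (wb e)
  choose W hW using hlift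
  refine ⟨W, fun c => ?_⟩
  rw [← Ideal.Quotient.eq_zero_iff_mem, map_sub, map_sum]
  have h2 := congrFun hwb c
  rw [toLin'_coord] at h2
  rw [Finset.sum_congr rfl (fun e _ => by rw [map_mul, D.L_mk, hW])]
  rw [h2, sub_self]

variable (hQI : I = Ideal.span Q) (hQ2 : ∀ q ∈ Q, q.IsHomogeneous 2)
include hQI hQ2

lemma gkexact (p : ℕ) {u : ℕ} (hu : 1 ≤ u) (V : Fin (D.b (p+1)) → MvPolynomial (Fin n) K)
    (hVh : ∀ c, (V c).IsHomogeneous u)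
    (hV : ∀ a, ∑ c, D.M p a c * Ideal.Quotient.mk I (V c) = 0) :
    ∃ W : Fin (D.b (p+2)) → MvPolynomial (Fin n) K,
      (∀ e, (W e).IsHomogeneous (u-1)) ∧
      ∀ c, V c - ∑ e, D.L (p+1) c e * W e ∈ I := by
  obtain ⟨W', hW'⟩ := kexact D p V hV
  refine ⟨fun e => homogeneousComponent (u-1) (W' e),
    fun e => homogeneousComponent_isHomogeneous _ _, fun c => ?_⟩
  have hmem := ideal_hc hQI hQ2 (hW' c) u
  have heq : homogeneousComponent u (V c - ∑ e, D.L (p+1) c e * W' e)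
      = V c - ∑ e, D.L (p+1) c e * homogeneousComponent (u-1) (W' e) := by
    rw [map_sub, map_sum, hc_of_homog (hVh c)]
    congr 1
    apply Finset.sum_congr rfl
    intro e _
    rw [hc_mul (D.L_homog (p+1) c e), if_pos hu]
  rwa [heq] at hmem

lemma spanx (i : Fin n) : ∃ κ : Fin (D.b 1) → MvPolynomial (Fin n) K,
    (∀ c, (κ c).IsHomogeneous 0) ∧ X i = ∑ c, D.L 0 D.iz c * κ c := by
  have hX : (fun _ : Fin (D.b 0) => Ideal.Quotient.mk I (X i)) ∈
      Submodule.pi Set.univ (fun _ : Fin (D.b 0) =>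
        (Ideal.map (Ideal.Quotient.mk I)
          (Ideal.span (Set.range (X : Fin n → MvPolynomial (Fin n) K))) :
            Ideal (MvPolynomial (Fin n) K ⧸ I))) := by
    rw [Submodule.mem_pi]
    intro a _
    exact Ideal.mem_map_of_mem _ (Ideal.subset_span ⟨i, rfl⟩)
  rw [← D.range0] at hX
  obtain ⟨vb, hvb⟩ := hX
  have h2 := congrFun hvb D.iz
  rw [toLin'_coord] at h2
  have hlift : ∀ c, ∃ x : MvPolynomial (Fin n) K, Ideal.Quotient.mk I x = vb c :=
    fun c => Ideal.Quotient.mk_surjective (vb c)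
  choose v hv using hlift
  have hmem : X i - ∑ c, D.L 0 D.iz c * v c ∈ I := by
    rw [← Ideal.Quotient.eq_zero_iff_mem, map_sub, map_sum]
    rw [Finset.sum_congr rfl (fun c _ => by rw [map_mul, D.L_mk, hv])]
    rw [h2, sub_self]
  have hmem1 := ideal_hc hQI hQ2 hmem 1
  have heq : homogeneousComponent 1 (X i - ∑ c, D.L 0 D.iz c * v c)
      = X i - ∑ c, D.L 0 D.iz c * homogeneousComponent 0 (v c) := by
    rw [map_sub, map_sum, hc_of_homog (isHomogeneous_X K i)]
    congr 1
    apply Finset.sum_congr rfl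
    intro c _
    rw [hc_mul (D.L_homog 0 D.iz c), if_pos (by omega)]
  rw [heq] at hmem1
  have hzero := ideal_low hQI hQ2 hmem1
    (homog_sub (isHomogeneous_X K i)
      (IsHomogeneous.sum _ _ _ (fun c _ => homog_cast
        ((D.L_homog 0 D.iz c).mul (homogeneousComponent_isHomogeneous 0 (v c))) (by omega))))
    (by omega)
  exact ⟨fun c => homogeneousComponent 0 (v c),
    fun c => homogeneousComponent_isHomogeneous _ _, by
      have := sub_eq_zero.mp hzero
      exact this⟩

lemma mrow {f : MvPolynomial (Fin n) K} {u : ℕ} (hf : f.IsHomogeneous u) (hu : 1 ≤ u) :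
    ∃ w : Fin (D.b 1) → MvPolynomial (Fin n) K,
      (∀ c, (w c).IsHomogeneous (u-1)) ∧ f = ∑ c, D.L 0 D.iz c * w c := by
  obtain ⟨v, hvh, hvr⟩ := exists_X_decomp hf hu
  have hκ := fun i => spanx D hQI hQ2 i
  choose κ hκh hκr using hκ
  refine ⟨fun c => ∑ i, κ i c * v i, ?_, ?_⟩
  · intro c
    exact IsHomogeneous.sum _ _ _ (fun i _ => homog_cast ((hκh i c).mul (hvh i)) (by omega))
  · rw [hvr]
    rw [Finset.sum_congr rfl (fun i (_ : i ∈ Finset.univ) => by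
      rw [hκr i, Finset.sum_mul])]
    rw [Finset.sum_comm]
    apply Finset.sum_congr rfl
    intro c _
    rw [Finset.mul_sum]
    apply Finset.sum_congr rfl
    intro i _
    ring

end KSide

section H1

variable {I : Ideal (MvPolynomial (Fin n) K)} {Q : Set (MvPolynomial (Fin n) K)}
variable (hQI : I = Ideal.span Q) (hQ2 : ∀ q ∈ Q, q.IsHomogeneous 2)
include hQI hQ2

lemma ideal_X_decomp {f : MvPolynomial (Fin n) K} {u : ℕ} (hf : f ∈ I)
    (hfh : f.IsHomogeneous u) (hu : 3 ≤ u) :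
    ∃ q : Fin n → MvPolynomial (Fin n) K,
      (∀ i, q i ∈ I ∧ (q i).IsHomogeneous (u-1)) ∧ f = ∑ i, X i * q i := by
  classical
  obtain ⟨t, φ, hts, hφ, hrep, -⟩ := ideal_decompQ hQI hQ2 hf hfh
  have hch : ∀ p : MvPolynomial (Fin n) K, ∃ ψ : Fin n → MvPolynomial (Fin n) K,
      p ∈ t → ((∀ i, (ψ i).IsHomogeneous (u - 2 - 1)) ∧ φ p = ∑ i, X i * ψ i) := by
    intro p
    by_cases hp : p ∈ t
    · obtain ⟨ψ, h1, h2⟩ := exists_X_decomp (hφ p hp) (by omega)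
      exact ⟨ψ, fun _ => ⟨h1, h2⟩⟩
    · exact ⟨0, fun h => absurd h hp⟩
  choose ψ hψ using hch
  refine ⟨fun i => ∑ p ∈ t, ψ p i * p, ?_, ?_⟩
  · intro i
    constructor
    · exact Ideal.sum_mem _ (fun p hp => Ideal.mul_mem_left _ _ (hts p hp).1)
    · exact IsHomogeneous.sum _ _ _ (fun p hp =>
        homog_cast (((hψ p hp).1 i).mul (hts p hp).2) (by omega))
  · rw [hrep]
    calc ∑ p ∈ t, φ p * p = ∑ p ∈ t, ∑ i, X i * (ψ p i * p) := by
          apply Finset.sum_congr rfl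
          intro p hp
          rw [(hψ p hp).2, Finset.sum_mul]
          apply Finset.sum_congr rfl
          intro i _
          ring
      _ = ∑ i, ∑ p ∈ t, X i * (ψ p i * p) := Finset.sum_comm
      _ = ∑ i, X i * ∑ p ∈ t, ψ p i * p := by
          apply Finset.sum_congr rfl
          intro i _
          rw [Finset.mul_sum]

lemma h1lemma {u : ℕ} (hu : 3 ≤ u) (p : Fin n → MvPolynomial (Fin n) K)
    (hp : ∀ i, (p i).IsHomogeneous (u-1)) (hmem : (∑ i, X i * p i) ∈ I) :
    ∃ (z : Fin n → Fin n → MvPolynomial (Fin n) K) (q : Fin n → MvPolynomial (Fin n) K),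
      (∀ i j, z i j = - z j i) ∧ (∀ i, z i i = 0) ∧
      (∀ i j, (z i j).IsHomogeneous (u-2)) ∧
      (∀ i, q i ∈ I ∧ (q i).IsHomogeneous (u-1)) ∧
      ∀ i, p i = (∑ j, X j * z j i) + q i := by
  have hfh : (∑ i, X i * p i).IsHomogeneous u :=
    IsHomogeneous.sum _ _ _ (fun i _ => homog_cast (homog_X_mul i (hp i)) (by omega))
  obtain ⟨q, hq, hrep⟩ := ideal_X_decomp hQI hQ2 hmem hfh hu
  have hsyz : ∑ i, X i * (p i - q i) = 0 := by
    rw [Finset.sum_congr rfl (fun i (_ : i ∈ Finset.univ) => mul_sub (X i) (p i) (q i)),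
      Finset.sum_sub_distrib, ← hrep, sub_self]
  obtain ⟨z', hskew', hdiag', hrep'⟩ := koszul_syz _ hsyz
  refine ⟨fun i j => homogeneousComponent (u-2) (z' i j), q, ?_, ?_, ?_, hq, ?_⟩
  · intro i j
    dsimp only
    rw [hskew' i j, map_neg]
  · intro i
    dsimp only
    rw [hdiag' i, map_zero]
  · intro i j
    exact homogeneousComponent_isHomogeneous _ _
  · intro i
    have hpq : (p i - q i).IsHomogeneous (u-1) := homog_sub (hp i) (hq i).2
    have h2 : p i - q i = ∑ j, X j * homogeneousComponent (u-2) (z' j i) := by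
      conv_lhs => rw [← hc_of_homog hpq, hrep' i]
      rw [map_sum]
      apply Finset.sum_congr rfl
      intro jj _
      rw [hc_mul (isHomogeneous_X K jj), if_pos (by omega),
        show u - 1 - 1 = u - 2 by omega]
    rw [← h2]
    ring

end H1

section ChaseA

variable {I : Ideal (MvPolynomial (Fin n) K)} {Q : Set (MvPolynomial (Fin n) K)}
variable (D : KoszulData (I := I))
variable (hQI : I = Ideal.span Q) (hQ2 : ∀ q ∈ Q, q.IsHomogeneous 2)
include D hQI hQ2

set_option maxHeartbeats 2000000 in
lemma lemmaA' {t : ℕ} (ht : 5 ≤ t) (ξ : Fin n → MvPolynomial (Fin n) K)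
    (hξI : ∀ i, ξ i ∈ I) (hξh : ∀ i, (ξ i).IsHomogeneous (t-1))
    (hξs : ∑ i, X i * ξ i = 0) :
    ∃ Ξ : Fin n → Fin n → MvPolynomial (Fin n) K,
      (∀ i j, Ξ i j = - Ξ j i) ∧ (∀ i, Ξ i i = 0) ∧ (∀ i j, Ξ i j ∈ I) ∧
      (∀ i j, (Ξ i j).IsHomogeneous (t-2)) ∧ (∀ i, ξ i = ∑ j, X j * Ξ j i) := by
  classical
  -- Step 1 : a Koszul 2-chain bounding ξ
  obtain ⟨z'', hsk'', hdg'', hrep''⟩ := koszul_syz ξ hξs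
  set Θ : Fin n → Fin n → MvPolynomial (Fin n) K :=
    fun i j => homogeneousComponent (t-2) (z'' i j) with hΘdef
  have hΘsk : ∀ i j, Θ i j = - Θ j i := by
    intro i j
    rw [hΘdef]
    dsimp only
    rw [hsk'' i j, map_neg]
  have hΘdg : ∀ i, Θ i i = 0 := by
    intro i
    rw [hΘdef]
    dsimp only
    rw [hdg'' i, map_zero]
  have hΘhom : ∀ i j, (Θ i j).IsHomogeneous (t-2) :=
    fun i j => homogeneousComponent_isHomogeneous _ _
  have hΘ : ∀ i, ξ i = ∑ j, X j * Θ j i := by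
    intro i
    conv_lhs => rw [← hc_of_homog (hξh i), hrep'' i]
    rw [map_sum]
    apply Finset.sum_congr rfl
    intro j _
    rw [hc_mul (isHomogeneous_X K j), if_pos (by omega),
      show t - 1 - 1 = t - 2 by omega]
  -- Step 2 : pull Θ back along the augmentation row
  have hch1 : ∀ i j : Fin n, ∃ w : Fin (D.b 1) → MvPolynomial (Fin n) K,
      (∀ c, (w c).IsHomogeneous (t-3)) ∧ (i < j → Θ i j = ∑ c, D.L 0 D.iz c * w c) := by
    intro i j
    by_cases h : i < j
    · obtain ⟨w, h1, h2⟩ := mrow D hQI hQ2 (hΘhom i j) (by omega)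
      exact ⟨w, fun c => homog_cast (h1 c) (by omega), fun _ => h2⟩
    · exact ⟨0, fun c => isHomogeneous_zero _ _ _, fun h' => absurd h' h⟩
  choose w₁ hw₁h hw₁r using hch1
  set α₁ : Fin (D.b 1) → Fin n → Fin n → MvPolynomial (Fin n) K := fun c i j =>
    if i < j then w₁ i j c else if j < i then - (w₁ j i c) else 0 with hα₁def
  have hα₁sk : ∀ c i j, α₁ c i j = - α₁ c j i := by
    intro c i j
    rw [hα₁def]
    dsimp only
    rcases lt_trichotomy i j with h | h | h
    · rw [if_pos h, if_neg (by omega), if_pos h, neg_neg]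
    · rw [if_neg (by omega), if_neg (by omega), if_neg (by omega), if_neg (by omega), neg_zero]
    · rw [if_neg (by omega), if_pos h, if_pos h]
  have hα₁dg : ∀ c i, α₁ c i i = 0 := by
    intro c i
    rw [hα₁def]
    dsimp only
    rw [if_neg (by omega), if_neg (by omega)]
  have hα₁hom : ∀ c i j, (α₁ c i j).IsHomogeneous (t-3) := by
    intro c i j
    rw [hα₁def]
    dsimp only
    split_ifs with h1 h2
    · exact hw₁h i j c
    · exact homog_neg (hw₁h j i c)
    · exact isHomogeneous_zero _ _ _
  have hΘα : ∀ i j, Θ i j = ∑ c, D.L 0 D.iz c * α₁ c i j := by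
    intro i j
    rcases lt_trichotomy i j with h | h | h
    · rw [hw₁r i j h]
      apply Finset.sum_congr rfl
      intro c _
      rw [hα₁def]
      dsimp only
      rw [if_pos h]
    · subst h
      rw [hΘdg i, Finset.sum_congr rfl (fun c _ => by rw [hα₁dg c i, mul_zero]),
        Finset.sum_const_zero]
    · rw [hΘsk i j, hw₁r j i h]
      rw [← Finset.sum_neg_distrib]
      apply Finset.sum_congr rfl
      intro c _
      rw [hα₁def]
      dsimp only
      rw [if_neg (by omega), if_pos h]
      ring
  -- Step 3 : vertical differential of α₁
  set β₁ : Fin (D.b 1) → Fin n → MvPolynomial (Fin n) K :=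
    fun c i => ∑ j, X j * α₁ c j i with hβ₁def
  have hβ₁hom : ∀ c i, (β₁ c i).IsHomogeneous (t-2) := by
    intro c i
    rw [hβ₁def]
    exact IsHomogeneous.sum _ _ _
      (fun j _ => homog_cast (homog_X_mul j (hα₁hom c j i)) (by omega))
  have hβξ : ∀ i, ∑ c, D.L 0 D.iz c * β₁ c i = ξ i := by
    intro i
    calc ∑ c, D.L 0 D.iz c * β₁ c i
        = ∑ c, ∑ j, X j * (D.L 0 D.iz c * α₁ c j i) := by
          apply Finset.sum_congr rfl
          intro c _
          rw [hβ₁def]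
          dsimp only
          rw [Finset.mul_sum]
          exact Finset.sum_congr rfl (fun j _ => by ring)
      _ = ∑ j, ∑ c, X j * (D.L 0 D.iz c * α₁ c j i) := Finset.sum_comm
      _ = ∑ j, X j * Θ j i := by
          apply Finset.sum_congr rfl
          intro j _
          rw [← Finset.mul_sum, ← hΘα j i]
      _ = ξ i := (hΘ i).symm
  have halt₁ : ∀ c, ∑ i, X i * β₁ c i = 0 := by
    intro c
    have h := sum_alt_zero (fun i j => α₁ c i j) (hα₁sk c) (hα₁dg c)
    rw [hβ₁def]
    exact h
  -- Step 4 : lift along homological degree 1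
  have hstep4 : ∀ i : Fin n, ∃ W : Fin (D.b 2) → MvPolynomial (Fin n) K,
      (∀ e, (W e).IsHomogeneous (t-3)) ∧
      ∀ c, β₁ c i - ∑ e, D.L 1 c e * W e ∈ I := by
    intro i
    have hV : ∀ a, ∑ c, D.M 0 a c * Ideal.Quotient.mk I (β₁ c i) = 0 := by
      intro a
      rw [D.iz_unique a]
      have hh : ∑ c, D.M 0 D.iz c * Ideal.Quotient.mk I (β₁ c i)
          = Ideal.Quotient.mk I (∑ c, D.L 0 D.iz c * β₁ c i) := by
        rw [map_sum]
        exact Finset.sum_congr rfl (fun c _ => by rw [map_mul, D.L_mk])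
      rw [hh, hβξ i]
      exact Ideal.Quotient.eq_zero_iff_mem.mpr (hξI i)
    obtain ⟨W, h1, h2⟩ := gkexact D hQI hQ2 0 (u := t-2) (by omega) (fun c => β₁ c i)
      (fun c => hβ₁hom c i) hV
    exact ⟨W, fun e => homog_cast (h1 e) (by omega), h2⟩
  choose α₂ hα₂h hα₂I using hstep4
  set q₁ : Fin (D.b 1) → Fin n → MvPolynomial (Fin n) K :=
    fun c i => β₁ c i - ∑ e, D.L 1 c e * α₂ i e with hq₁def
  have hq₁I : ∀ c i, q₁ c i ∈ I := fun c i => hα₂I i c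
  -- Step 5 : vertical differential of α₂
  set β₂ : Fin (D.b 2) → MvPolynomial (Fin n) K :=
    fun e => ∑ i, X i * α₂ i e with hβ₂def
  have hβ₂hom : ∀ e, (β₂ e).IsHomogeneous (t-2) := by
    intro e
    rw [hβ₂def]
    exact IsHomogeneous.sum _ _ _
      (fun i _ => homog_cast (homog_X_mul i (hα₂h i e)) (by omega))
  have hL1β₂ : ∀ c, ∑ e, D.L 1 c e * β₂ e = - ∑ i, X i * q₁ c i := by
    intro c
    calc ∑ e, D.L 1 c e * β₂ e
        = ∑ e, ∑ i, X i * (D.L 1 c e * α₂ i e) := by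
          apply Finset.sum_congr rfl
          intro e _
          rw [hβ₂def]
          dsimp only
          rw [Finset.mul_sum]
          exact Finset.sum_congr rfl (fun i _ => by ring)
      _ = ∑ i, ∑ e, X i * (D.L 1 c e * α₂ i e) := Finset.sum_comm
      _ = ∑ i, X i * (β₁ c i - q₁ c i) := by
          apply Finset.sum_congr rfl
          intro i _
          rw [← Finset.mul_sum]
          congr 1
          rw [hq₁def]
          dsimp only
          ring
      _ = ∑ i, X i * β₁ c i - ∑ i, X i * q₁ c i := by
          rw [← Finset.sum_sub_distrib]
          exact Finset.sum_congr rfl (fun i _ => by ring)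
      _ = - ∑ i, X i * q₁ c i := by rw [halt₁ c, zero_sub]
  -- Step 6 : lift along homological degree 2
  have hstep6 : ∃ W : Fin (D.b 3) → MvPolynomial (Fin n) K,
      (∀ e', (W e').IsHomogeneous (t-3)) ∧
      ∀ e, β₂ e - ∑ e', D.L 2 e e' * W e' ∈ I := by
    have hV : ∀ c, ∑ e, D.M 1 c e * Ideal.Quotient.mk I (β₂ e) = 0 := by
      intro c
      have hh : ∑ e, D.M 1 c e * Ideal.Quotient.mk I (β₂ e)
          = Ideal.Quotient.mk I (∑ e, D.L 1 c e * β₂ e) := by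
        rw [map_sum]
        exact Finset.sum_congr rfl (fun e _ => by rw [map_mul, D.L_mk])
      rw [hh, hL1β₂ c, map_neg, map_sum]
      rw [Finset.sum_congr rfl (fun i (_ : i ∈ Finset.univ) =>
        Ideal.Quotient.eq_zero_iff_mem.mpr (Ideal.mul_mem_left _ _ (hq₁I c i)))]
      simp
    obtain ⟨W, h1, h2⟩ := gkexact D hQI hQ2 1 (u := t-2) (by omega) β₂ hβ₂hom hV
    exact ⟨W, fun e' => homog_cast (h1 e') (by omega), h2⟩
  obtain ⟨α₃, hα₃h, hα₃I⟩ := hstep6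
  set q₂ : Fin (D.b 2) → MvPolynomial (Fin n) K :=
    fun e => β₂ e - ∑ e', D.L 2 e e' * α₃ e' with hq₂def
  have hq₂I : ∀ e, q₂ e ∈ I := fun e => hα₃I e
  -- Step 7 : α₃ has positive degree, write it in the variables
  have hstep7 : ∀ e', ∃ μ : Fin n → MvPolynomial (Fin n) K,
      (∀ i, (μ i).IsHomogeneous (t-4)) ∧ α₃ e' = ∑ i, X i * μ i := by
    intro e'
    obtain ⟨μ, h1, h2⟩ := exists_X_decomp (hα₃h e') (by omega)
    exact ⟨μ, fun i => homog_cast (h1 i) (by omega), h2⟩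
  choose μ hμh hμr using hstep7
  -- Step 8 : correct α₂
  set α₂' : Fin n → Fin (D.b 2) → MvPolynomial (Fin n) K :=
    fun i e => α₂ i e - ∑ e', D.L 2 e e' * μ e' i with hα₂'def
  have hα₂'h : ∀ i e, (α₂' i e).IsHomogeneous (t-3) := by
    intro i e
    rw [hα₂'def]
    dsimp only
    exact homog_sub (hα₂h i e) (IsHomogeneous.sum _ _ _
      (fun e' _ => homog_cast ((D.L_homog 2 e e').mul (hμh e' i)) (by omega)))
  have hcyc : ∀ e, (∑ i, X i * α₂' i e) ∈ I := by
    intro e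
    have hh : ∑ i, X i * α₂' i e = q₂ e := by
      rw [hq₂def]
      dsimp only
      calc ∑ i, X i * α₂' i e
          = ∑ i, (X i * α₂ i e - ∑ e', D.L 2 e e' * (X i * μ e' i)) := by
            apply Finset.sum_congr rfl
            intro i _
            rw [hα₂'def]
            dsimp only
            rw [mul_sub, Finset.mul_sum]
            congr 1
            exact Finset.sum_congr rfl (fun e' _ => by ring)
        _ = ∑ i, X i * α₂ i e - ∑ i, ∑ e', D.L 2 e e' * (X i * μ e' i) :=
            Finset.sum_sub_distrib _ _
        _ = β₂ e - ∑ e', D.L 2 e e' * α₃ e' := by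
            rw [hβ₂def]
            congr 1
            rw [Finset.sum_comm]
            apply Finset.sum_congr rfl
            intro e' _
            rw [hμr e', Finset.mul_sum]
    rw [hh]
    exact hq₂I e
  -- Step 9 : apply the H₁-vanishing lemma to each column of α₂'
  have hstep9 : ∀ e, ∃ (z : Fin n → Fin n → MvPolynomial (Fin n) K)
      (q : Fin n → MvPolynomial (Fin n) K),
      (∀ i j, z i j = - z j i) ∧ (∀ i, z i i = 0) ∧
      (∀ i j, (z i j).IsHomogeneous (t-4)) ∧
      (∀ i, q i ∈ I ∧ (q i).IsHomogeneous (t-3)) ∧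
      ∀ i, α₂' i e = (∑ j, X j * z j i) + q i := by
    intro e
    obtain ⟨z, q, h1, h2, h3, h4, h5⟩ := h1lemma hQI hQ2 (u := t-2) (by omega)
      (fun i => α₂' i e) (fun i => homog_cast (hα₂'h i e) (by omega)) (hcyc e)
    exact ⟨z, q, h1, h2, fun i j => homog_cast (h3 i j) (by omega),
      fun i => ⟨(h4 i).1, homog_cast (h4 i).2 (by omega)⟩, h5⟩
  choose ν q₃ hνsk hνdg hνh hq₃ hνr using hstep9
  -- Step 10 : correct α₁
  set α₁' : Fin (D.b 1) → Fin n → Fin n → MvPolynomial (Fin n) K :=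
    fun c i j => α₁ c i j - ∑ e, D.L 1 c e * ν e i j with hα₁'def
  have hα₁'sk : ∀ c i j, α₁' c i j = - α₁' c j i := by
    intro c i j
    rw [hα₁'def]
    dsimp only
    rw [hα₁sk c i j,
      Finset.sum_congr rfl (fun e (_ : e ∈ Finset.univ) => by rw [hνsk e i j, mul_neg]),
      Finset.sum_neg_distrib]
    ring
  have hα₁'dg : ∀ c i, α₁' c i i = 0 := by
    intro c i
    rw [hα₁'def]
    dsimp only
    rw [hα₁dg c i,
      Finset.sum_congr rfl (fun e (_ : e ∈ Finset.univ) => by rw [hνdg e i, mul_zero]),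
      Finset.sum_const_zero, sub_zero]
  have hα₁'hom : ∀ c i j, (α₁' c i j).IsHomogeneous (t-3) := by
    intro c i j
    rw [hα₁'def]
    dsimp only
    exact homog_sub (hα₁hom c i j) (IsHomogeneous.sum _ _ _
      (fun e _ => homog_cast ((D.L_homog 1 c e).mul (hνh e i j)) (by omega)))
  -- Step 11 : the rows of the corrected α₁' have boundaries in I
  set ρ : Fin (D.b 1) → Fin n → MvPolynomial (Fin n) K :=
    fun c i => ∑ j, X j * α₁' c j i with hρdef
  have hρeq : ∀ c i, ρ c i
      = q₁ c i + (∑ e', (∑ e, D.L 1 c e * D.L 2 e e') * μ e' i)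
        + ∑ e, D.L 1 c e * q₃ e i := by
    intro c i
    rw [hρdef]
    dsimp only
    calc ∑ j, X j * α₁' c j i
        = ∑ j, (X j * α₁ c j i - ∑ e, D.L 1 c e * (X j * ν e j i)) := by
          apply Finset.sum_congr rfl
          intro j _
          rw [hα₁'def]
          dsimp only
          rw [mul_sub, Finset.mul_sum]
          congr 1
          exact Finset.sum_congr rfl (fun e _ => by ring)
      _ = β₁ c i - ∑ e, D.L 1 c e * (∑ j, X j * ν e j i) := by
          rw [Finset.sum_sub_distrib]
          congr 1
          rw [Finset.sum_comm]
          exact Finset.sum_congr rfl (fun e _ => by rw [Finset.mul_sum])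
      _ = β₁ c i - ∑ e, D.L 1 c e * (α₂' i e - q₃ e i) := by
          congr 1
          apply Finset.sum_congr rfl
          intro e _
          congr 1
          rw [hνr e i]
          ring
      _ = β₁ c i - ∑ e, D.L 1 c e * α₂ i e
            + (∑ e', (∑ e, D.L 1 c e * D.L 2 e e') * μ e' i)
            + ∑ e, D.L 1 c e * q₃ e i := by
          have hexp : ∀ e, D.L 1 c e * (α₂' i e - q₃ e i)
              = D.L 1 c e * α₂ i e - (∑ e', D.L 1 c e * (D.L 2 e e' * μ e' i))
                - D.L 1 c e * q₃ e i := by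
            intro e
            rw [hα₂'def]
            dsimp only
            rw [mul_sub, mul_sub, Finset.mul_sum]
          rw [Finset.sum_congr rfl (fun e (_ : e ∈ Finset.univ) => hexp e),
            Finset.sum_sub_distrib, Finset.sum_sub_distrib]
          have hswap : ∑ e, ∑ e', D.L 1 c e * (D.L 2 e e' * μ e' i)
              = ∑ e', (∑ e, D.L 1 c e * D.L 2 e e') * μ e' i := by
            rw [Finset.sum_comm]
            apply Finset.sum_congr rfl
            intro e' _
            rw [Finset.sum_mul]
            exact Finset.sum_congr rfl (fun e _ => by ring)
          rw [hswap]
          ring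
      _ = q₁ c i + (∑ e', (∑ e, D.L 1 c e * D.L 2 e e') * μ e' i)
            + ∑ e, D.L 1 c e * q₃ e i := by
          rw [hq₁def]
  have hρI : ∀ c i, ρ c i ∈ I := by
    intro c i
    rw [hρeq c i]
    refine Ideal.add_mem _ (Ideal.add_mem _ (hq₁I c i) ?_) ?_
    · exact Ideal.sum_mem _ (fun e' _ => Ideal.mul_mem_right _ _ (kcomplex D 1 c e'))
    · exact Ideal.sum_mem _ (fun e _ => Ideal.mul_mem_left _ _ (hq₃ e i).1)
  have hρhom : ∀ c i, (ρ c i).IsHomogeneous (t-2) := by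
    intro c i
    rw [hρdef]
    exact IsHomogeneous.sum _ _ _
      (fun j _ => homog_cast (homog_X_mul j (hα₁'hom c j i)) (by omega))
  have hρ0 : ∀ c, ∑ j, X j * ρ c j = 0 := by
    intro c
    have h := sum_alt_zero (fun i j => α₁' c i j) (hα₁'sk c) (hα₁'dg c)
    rw [hρdef]
    exact h
  -- Step 12 : corrected Θ'
  set Θ' : Fin n → Fin n → MvPolynomial (Fin n) K :=
    fun i j => ∑ c, D.L 0 D.iz c * α₁' c i j with hT'def
  have hT'sk : ∀ i j, Θ' i j = - Θ' j i := by
    intro i j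
    rw [hT'def]
    dsimp only
    rw [Finset.sum_congr rfl (fun c (_ : c ∈ Finset.univ) => by
      rw [hα₁'sk c i j, mul_neg]), Finset.sum_neg_distrib]
  have hT'dg : ∀ i, Θ' i i = 0 := by
    intro i
    rw [hT'def]
    dsimp only
    rw [Finset.sum_congr rfl (fun c (_ : c ∈ Finset.univ) => by
      rw [hα₁'dg c i, mul_zero]), Finset.sum_const_zero]
  have hT'hom : ∀ i j, (Θ' i j).IsHomogeneous (t-2) := by
    intro i j
    rw [hT'def]
    exact IsHomogeneous.sum _ _ _
      (fun c _ => homog_cast ((D.L_homog 0 D.iz c).mul (hα₁'hom c i j)) (by omega))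
  have hDI : ∀ i j, Θ i j - Θ' i j ∈ I := by
    intro i j
    have hh : Θ i j - Θ' i j = ∑ e, (∑ c, D.L 0 D.iz c * D.L 1 c e) * ν e i j := by
      rw [hΘα i j, hT'def]
      dsimp only
      rw [← Finset.sum_sub_distrib]
      calc ∑ c, (D.L 0 D.iz c * α₁ c i j - D.L 0 D.iz c * α₁' c i j)
          = ∑ c, ∑ e, D.L 0 D.iz c * (D.L 1 c e * ν e i j) := by
            apply Finset.sum_congr rfl
            intro c _
            rw [hα₁'def]
            dsimp only
            rw [mul_sub, sub_sub_cancel, Finset.mul_sum]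
        _ = ∑ e, ∑ c, D.L 0 D.iz c * (D.L 1 c e * ν e i j) := Finset.sum_comm
        _ = ∑ e, (∑ c, D.L 0 D.iz c * D.L 1 c e) * ν e i j := by
            apply Finset.sum_congr rfl
            intro e _
            rw [Finset.sum_mul]
            exact Finset.sum_congr rfl (fun c _ => by ring)
    rw [hh]
    exact Ideal.sum_mem _ (fun e _ => Ideal.mul_mem_right _ _ (kcomplex D 0 D.iz e))
  -- Step 13 : the explicit homotopy
  have hκch : ∀ c, ∃ κ : Fin n → MvPolynomial (Fin n) K,
      (∀ m, (κ m).IsHomogeneous 0) ∧ D.L 0 D.iz c = ∑ m, X m * κ m := by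
    intro c
    obtain ⟨κ, h1, h2⟩ := exists_X_decomp (D.L_homog 0 D.iz c) (by omega)
    exact ⟨κ, fun m => homog_cast (h1 m) (by omega), h2⟩
  choose κ hκh hκr using hκch
  set Ξ1 : Fin n → Fin n → MvPolynomial (Fin n) K :=
    fun i j => ∑ c, (κ c i * ρ c j - κ c j * ρ c i) with hX1def
  have hX1sk : ∀ i j, Ξ1 i j = - Ξ1 j i := by
    intro i j
    rw [hX1def]
    dsimp only
    rw [← Finset.sum_neg_distrib]
    exact Finset.sum_congr rfl (fun c _ => by ring)
  have hX1dg : ∀ i, Ξ1 i i = 0 := by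
    intro i
    rw [hX1def]
    dsimp only
    rw [Finset.sum_congr rfl (fun c (_ : c ∈ Finset.univ) => sub_self _),
      Finset.sum_const_zero]
  have hX1I : ∀ i j, Ξ1 i j ∈ I := by
    intro i j
    rw [hX1def]
    dsimp only
    exact Ideal.sum_mem _ (fun c _ => Ideal.sub_mem _
      (Ideal.mul_mem_left _ _ (hρI c j)) (Ideal.mul_mem_left _ _ (hρI c i)))
  have hX1hom : ∀ i j, (Ξ1 i j).IsHomogeneous (t-2) := by
    intro i j
    rw [hX1def]
    dsimp only
    exact IsHomogeneous.sum _ _ _ (fun c _ => homog_sub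
      (homog_cast ((hκh c i).mul (hρhom c j)) (by omega))
      (homog_cast ((hκh c j).mul (hρhom c i)) (by omega)))
  have hdX1 : ∀ i, ∑ j, X j * Ξ1 j i = ∑ c, D.L 0 D.iz c * ρ c i := by
    intro i
    calc ∑ j, X j * Ξ1 j i
        = ∑ j, ∑ c, (X j * κ c j * ρ c i - κ c i * (X j * ρ c j)) := by
          apply Finset.sum_congr rfl
          intro j _
          rw [hX1def]
          dsimp only
          rw [Finset.mul_sum]
          exact Finset.sum_congr rfl (fun c _ => by ring)
      _ = ∑ c, ∑ j, (X j * κ c j * ρ c i - κ c i * (X j * ρ c j)) := Finset.sum_comm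
      _ = ∑ c, D.L 0 D.iz c * ρ c i := by
          apply Finset.sum_congr rfl
          intro c _
          rw [Finset.sum_sub_distrib, ← Finset.sum_mul, ← Finset.mul_sum, hρ0 c,
            mul_zero, sub_zero, ← hκr c]
  have hdT' : ∀ i, ∑ c, D.L 0 D.iz c * ρ c i = ∑ j, X j * Θ' j i := by
    intro i
    calc ∑ c, D.L 0 D.iz c * ρ c i
        = ∑ c, ∑ j, X j * (D.L 0 D.iz c * α₁' c j i) := by
          apply Finset.sum_congr rfl
          intro c _
          rw [hρdef]
          dsimp only
          rw [Finset.mul_sum]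
          exact Finset.sum_congr rfl (fun j _ => by ring)
      _ = ∑ j, ∑ c, X j * (D.L 0 D.iz c * α₁' c j i) := Finset.sum_comm
      _ = ∑ j, X j * Θ' j i := by
          apply Finset.sum_congr rfl
          intro j _
          rw [hT'def]
          dsimp only
          rw [Finset.mul_sum]
  -- Step 14 : assemble
  refine ⟨fun i j => Ξ1 i j + (Θ i j - Θ' i j), ?_, ?_, ?_, ?_, ?_⟩
  · intro i j
    dsimp only
    rw [hX1sk i j, hΘsk i j, hT'sk i j]
    ring
  · intro i
    dsimp only
    rw [hX1dg i, hΘdg i, hT'dg i]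
    ring
  · intro i j
    exact Ideal.add_mem _ (hX1I i j) (hDI i j)
  · intro i j
    exact homog_add (hX1hom i j) (homog_sub (hΘhom i j) (hT'hom i j))
  · intro i
    dsimp only
    have hsplit : ∑ j, X j * (Ξ1 j i + (Θ j i - Θ' j i))
        = (∑ j, X j * Ξ1 j i) + ((∑ j, X j * Θ j i) - (∑ j, X j * Θ' j i)) := by
      rw [← Finset.sum_sub_distrib, ← Finset.sum_add_distrib]
      exact Finset.sum_congr rfl (fun j _ => by ring)
    rw [hsplit, hdX1 i, hdT' i, ← hΘ i]
    ring

end ChaseA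

section ChaseB

variable {I : Ideal (MvPolynomial (Fin n) K)} {Q : Set (MvPolynomial (Fin n) K)}
variable (F : MinGradedFreeRes I) (D : KoszulData (I := I))
variable (hQI : I = Ideal.span Q) (hQ2 : ∀ q ∈ Q, q.IsHomogeneous 2)
include D hQI hQ2

lemma claimB {t : ℕ} (ht : 5 ≤ t) (s : Fin (F.b 1) → MvPolynomial (Fin n) K)
    (hsh : ∀ l, (s l).IsHomogeneous (t-2))
    (hsyz : ∑ l, F.M 0 (iz F) l * s l = 0) :
    ∃ δ : Fin n → Fin (F.b 1) → MvPolynomial (Fin n) K,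
      (∀ i l, (δ i l).IsHomogeneous (t-3)) ∧
      (∀ i, ∑ l, F.M 0 (iz F) l * δ i l = 0) ∧
      ∀ l, s l = ∑ i, X i * δ i l := by
  classical
  have hg2 : ∀ l, (F.M 0 (iz F) l).IsHomogeneous 2 := by
    intro l
    have h := g_homog F l
    rwa [d1_eq F hQI hQ2 l] at h
  have hch : ∀ l, ∃ v : Fin n → MvPolynomial (Fin n) K,
      (∀ i, (v i).IsHomogeneous (t-3)) ∧ s l = ∑ i, X i * v i := by
    intro l
    obtain ⟨v, h1, h2⟩ := exists_X_decomp (hsh l) (by omega)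
    exact ⟨v, fun i => homog_cast (h1 i) (by omega), h2⟩
  choose v hvh hvr using hch
  set ξ : Fin n → MvPolynomial (Fin n) K :=
    fun i => ∑ l, F.M 0 (iz F) l * v l i with hξdef
  have hξI : ∀ i, ξ i ∈ I := fun i => mem_I_of_rep F _
  have hξh : ∀ i, (ξ i).IsHomogeneous (t-1) := by
    intro i
    rw [hξdef]
    exact IsHomogeneous.sum _ _ _
      (fun l _ => homog_cast ((hg2 l).mul (hvh l i)) (by omega))
  have hξs : ∑ i, X i * ξ i = 0 := by
    calc ∑ i, X i * ξ i
        = ∑ i, ∑ l, F.M 0 (iz F) l * (X i * v l i) := by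
          apply Finset.sum_congr rfl
          intro i _
          rw [hξdef]
          dsimp only
          rw [Finset.mul_sum]
          exact Finset.sum_congr rfl (fun l _ => by ring)
      _ = ∑ l, ∑ i, F.M 0 (iz F) l * (X i * v l i) := Finset.sum_comm
      _ = ∑ l, F.M 0 (iz F) l * s l := by
          apply Finset.sum_congr rfl
          intro l _
          rw [← Finset.mul_sum, ← hvr l]
      _ = 0 := hsyz
  obtain ⟨Ξ, hXsk, hXdg, hXI, hXhom, hXrep⟩ := lemmaA' D hQI hQ2 ht ξ hξI hξh hξs
  have hchφ : ∀ ji i : Fin n, ∃ φ : Fin (F.b 1) → MvPolynomial (Fin n) K,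
      (∀ l, (φ l).IsHomogeneous (t-4)) ∧ Ξ ji i = ∑ l, F.M 0 (iz F) l * φ l := by
    intro ji i
    obtain ⟨φ, h1, _, h3⟩ := graded_rep F (hXI ji i) (hXhom ji i)
    refine ⟨φ, fun l => ?_, h3⟩
    have h4 := h1 l
    rw [d1_eq F hQI hQ2 l] at h4
    exact homog_cast h4 (by omega)
  choose φ' hφ'h hφ'r using hchφ
  set φ : Fin n → Fin n → Fin (F.b 1) → MvPolynomial (Fin n) K := fun ji i l =>
    if ji < i then φ' ji i l else if i < ji then - φ' i ji l else 0 with hφdef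
  have hφsk : ∀ ji i l, φ ji i l = - φ i ji l := by
    intro ji i l
    rw [hφdef]
    dsimp only
    rcases lt_trichotomy ji i with h | h | h
    · rw [if_pos h, if_neg (by omega), if_pos h, neg_neg]
    · rw [if_neg (by omega), if_neg (by omega), if_neg (by omega), if_neg (by omega), neg_zero]
    · rw [if_neg (by omega), if_pos h, if_pos h]
  have hφdg : ∀ i l, φ i i l = 0 := by
    intro i l
    rw [hφdef]
    dsimp only
    rw [if_neg (by omega), if_neg (by omega)]
  have hφh : ∀ ji i l, (φ ji i l).IsHomogeneous (t-4) := by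
    intro ji i l
    rw [hφdef]
    dsimp only
    split_ifs with h1 h2
    · exact hφ'h ji i l
    · exact homog_neg (hφ'h i ji l)
    · exact isHomogeneous_zero _ _ _
  have hφrep : ∀ ji i, Ξ ji i = ∑ l, F.M 0 (iz F) l * φ ji i l := by
    intro ji i
    rcases lt_trichotomy ji i with h | h | h
    · rw [hφ'r ji i]
      apply Finset.sum_congr rfl
      intro l _
      rw [hφdef]
      dsimp only
      rw [if_pos h]
    · subst h
      rw [hXdg ji, Finset.sum_congr rfl (fun l (_ : l ∈ Finset.univ) => by
        rw [hφdg ji l, mul_zero]), Finset.sum_const_zero]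
    · rw [hXsk ji i, hφ'r i ji, ← Finset.sum_neg_distrib]
      apply Finset.sum_congr rfl
      intro l _
      rw [hφdef]
      dsimp only
      rw [if_neg (by omega), if_pos h]
      ring
  refine ⟨fun i l => v l i - ∑ ji, X ji * φ ji i l, ?_, ?_, ?_⟩
  · intro i l
    exact homog_sub (hvh l i) (IsHomogeneous.sum _ _ _
      (fun ji _ => homog_cast (homog_X_mul ji (hφh ji i l)) (by omega)))
  · intro i
    calc ∑ l, F.M 0 (iz F) l * (v l i - ∑ ji, X ji * φ ji i l)
        = ∑ l, F.M 0 (iz F) l * v l i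
            - ∑ l, ∑ ji, X ji * (F.M 0 (iz F) l * φ ji i l) := by
          rw [← Finset.sum_sub_distrib]
          apply Finset.sum_congr rfl
          intro l _
          rw [mul_sub, Finset.mul_sum]
          congr 1
          exact Finset.sum_congr rfl (fun ji _ => by ring)
      _ = ξ i - ∑ ji, X ji * Ξ ji i := by
          rw [hξdef]
          congr 1
          rw [Finset.sum_comm]
          apply Finset.sum_congr rfl
          intro ji _
          rw [hφrep ji i, Finset.mul_sum]
      _ = 0 := by rw [← hXrep i, sub_self]
  · intro l
    calc s l = ∑ i, X i * v l i := hvr l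
      _ = ∑ i, X i * v l i - ∑ i, X i * (∑ ji, X ji * φ ji i l) := by
          rw [sum_alt_zero (fun ji i => φ ji i l) (fun ji i => hφsk ji i l)
            (fun i => hφdg i l), sub_zero]
      _ = ∑ i, X i * (v l i - ∑ ji, X ji * φ ji i l) := by
          rw [← Finset.sum_sub_distrib]
          exact Finset.sum_congr rfl (fun i _ => by ring)

lemma spanlow : ∀ t : ℕ, ∀ s : Fin (F.b 1) → MvPolynomial (Fin n) K,
    (∀ l, (s l).IsHomogeneous (t-2)) → (∑ l, F.M 0 (iz F) l * s l = 0) →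
    ∃ h : Fin (F.b 2) → MvPolynomial (Fin n) K,
      (∀ m, 5 ≤ F.deg 2 m → h m = 0) ∧
      ∀ l, s l = ∑ m, F.M 1 l m * h m := by
  intro t
  induction t using Nat.strong_induction_on with
  | _ t IH =>
    intro s hsh hsyz
    by_cases ht : 5 ≤ t
    · obtain ⟨δ, hδh, hδs, hδr⟩ := claimB F D hQI hQ2 ht s hsh hsyz
      have hIH := fun i => IH (t-1) (by omega) (δ i)
        (fun l => homog_cast (hδh i l) (by omega)) (hδs i)
      choose hh hh0 hhr using hIH
      refine ⟨fun m => ∑ i, X i * hh i m, ?_, ?_⟩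
      · intro m hm
        dsimp only
        rw [Finset.sum_congr rfl (fun i (_ : i ∈ Finset.univ) => by
          rw [hh0 i m hm, mul_zero]), Finset.sum_const_zero]
      · intro l
        rw [hδr l]
        calc ∑ i, X i * δ i l
            = ∑ i, ∑ m, F.M 1 l m * (X i * hh i m) := by
              apply Finset.sum_congr rfl
              intro i _
              rw [hhr i l, Finset.mul_sum]
              exact Finset.sum_congr rfl (fun m _ => by ring)
          _ = ∑ m, ∑ i, F.M 1 l m * (X i * hh i m) := Finset.sum_comm
          _ = ∑ m, F.M 1 l m * ∑ i, X i * hh i m := by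
              exact Finset.sum_congr rfl (fun m _ => by rw [Finset.mul_sum])
    · obtain ⟨h, hm0, hrep⟩ := syz_decomp_M1 F hQI hQ2 (u := t) hsh hsyz
      exact ⟨h, fun m hm => hm0 m (by omega), hrep⟩

end ChaseB

end KoszulAux

/-- If `I ⊆ S = K[x₁,…,xₙ]` is a graded ideal generated by quadrics and
the graded Betti number `β_{2,j}(S/I)` is nonzero for some `j > 4`, then `S/I` is not
Koszul. -/
theorem stmt_0 {K : Type*} [Field K] {n : ℕ} (I : Ideal (MvPolynomial (Fin n) K))
    (hquad : ∃ Q : Set (MvPolynomial (Fin n) K),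
      I = Ideal.span Q ∧ ∀ q ∈ Q, q.IsHomogeneous 2)
    (j : ℕ) (hj : 4 < j)
    (hbetti : ∃ (F : MinGradedFreeRes I) (k : Fin (F.b 2)), F.deg 2 k = j) :
    ¬ IsKoszulQuot I := by
  intro hK
  obtain ⟨Q, hQI, hQ2⟩ := hquad
  obtain ⟨F, k₀, hdeg⟩ := hbetti
  obtain ⟨b, M, hb0, hlin, hr, he⟩ := hK
  let D : KoszulAux.KoszulData I := ⟨b, M, hb0, hlin, hr, he⟩
  set s : Fin (F.b 1) → MvPolynomial (Fin n) K := fun l => F.M 1 l k₀ with hsdef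
  have hsh : ∀ l, (s l).IsHomogeneous (j-2) := by
    intro l
    have h := KoszulAux.M1_homog F hQI hQ2 l k₀
    rwa [hdeg] at h
  have hsyz : ∑ l, F.M 0 (KoszulAux.iz F) l * s l = 0 := by
    have hmem : s ∈ LinearMap.range (Matrix.toLin' (F.M 1)) := by
      refine ⟨Pi.single k₀ 1, ?_⟩
      funext l
      rw [KoszulAux.toLin'_coord, Finset.sum_eq_single k₀
        (fun b' _ hb' => by rw [Pi.single_eq_of_ne hb', mul_zero])
        (fun hl => absurd (Finset.mem_univ _) hl), Pi.single_eq_same, mul_one]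
    rw [F.exact_succ 0] at hmem
    exact (KoszulAux.mem_ker0_iff F s).mp hmem
  obtain ⟨h, h0, hrep⟩ := KoszulAux.spanlow F D hQI hQ2 j s hsh hsyz
  have hker : ((Pi.single k₀ 1 : Fin (F.b 2) → MvPolynomial (Fin n) K) - h) ∈
      LinearMap.ker (Matrix.toLin' (F.M 1)) := by
    rw [LinearMap.mem_ker]
    funext l
    rw [KoszulAux.toLin'_coord]
    have hsplit : ∀ m : Fin (F.b 2), F.M 1 l m *
        ((Pi.single k₀ 1 : Fin (F.b 2) → MvPolynomial (Fin n) K) - h) m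
        = F.M 1 l m * (Pi.single k₀ 1 : Fin (F.b 2) → MvPolynomial (Fin n) K) m
          - F.M 1 l m * h m := by
      intro m
      rw [Pi.sub_apply, mul_sub]
    rw [Finset.sum_congr rfl (fun m _ => hsplit m), Finset.sum_sub_distrib,
      Finset.sum_eq_single k₀
        (fun b' _ hb' => by rw [Pi.single_eq_of_ne hb', mul_zero])
        (fun hl => absurd (Finset.mem_univ _) hl), Pi.single_eq_same, mul_one,
      ← hrep l]
    simp only [Pi.zero_apply]
    exact sub_self (s l)
  rw [← F.exact_succ 1] at hker
  obtain ⟨w, hw⟩ := hker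
  have h2 := congrFun hw k₀
  rw [KoszulAux.toLin'_coord, Pi.sub_apply, Pi.single_eq_same,
    h0 k₀ (by omega), sub_zero] at h2
  exact KoszulAux.row_unit_contra F (i := 1) k₀ w h2.symm
end

section
/- If H is an induced subgraph of a finite simple graph G, then T/J_H is an algebra retract of S/J_G, where the retraction is given by the composition T/J_H → S/J_G → S/(J_G, L) ≅ T/J_H with L the ideal generated by the variables corresponding to vertices of G not in H. -/
open MvPolynomial

set_option synthInstance.maxHeartbeats 1000000
set_option maxHeartbeats 1000000

/-- The binomial edge ideal of a simple graph `G` on vertex set `V`, inside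
`S = K[x_v, y_v : v ∈ V]`, where `x_v = X (Sum.inl v)` and `y_v = X (Sum.inr v)`:
it is generated by the binomials `x_i y_j - x_j y_i` for edges `{i,j}` of `G`. -/
noncomputable def binomialEdgeIdeal (K : Type*) [Field K] {V : Type*} (G : SimpleGraph V) :
    Ideal (MvPolynomial (V ⊕ V) K) :=
  Ideal.span {f | ∃ i j, G.Adj i j ∧
    f = X (Sum.inl i) * X (Sum.inr j) - X (Sum.inl j) * X (Sum.inr i)}

/-- A graph `G` is *Koszul* (with respect to `K`) if `S/J_G` is a Koszul algebra. -/
def GraphKoszul (K : Type*) [Field K] {V : Type*} (G : SimpleGraph V) : Prop :=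
  IsKoszulQuot (binomialEdgeIdeal K G)

/-- If `H = G[W]` is an induced subgraph of `G`, then `T/J_H` is an
algebra retract of `S/J_G`: there are `K`-algebra maps `φ : T/J_H → S/J_G` (sending the
variables of `T` to the corresponding variables of `S`) and `ψ : S/J_G → T/J_H`
(sending the variables corresponding to vertices of `H` to themselves and all other
variables to `0`, i.e. reduction modulo `L`) whose composition is the identity of
`T/J_H`. -/
theorem stmt_4 {K : Type*} [Field K] {V : Type*} [Fintype V] (G : SimpleGraph V)
    (W : Set V) :
    ∃ (φ : (MvPolynomial (↥W ⊕ ↥W) K ⧸ binomialEdgeIdeal K (G.induce W)) →ₐ[K]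
          (MvPolynomial (V ⊕ V) K ⧸ binomialEdgeIdeal K G))
      (ψ : (MvPolynomial (V ⊕ V) K ⧸ binomialEdgeIdeal K G) →ₐ[K]
          (MvPolynomial (↥W ⊕ ↥W) K ⧸ binomialEdgeIdeal K (G.induce W))),
      (∀ w : ↥W ⊕ ↥W,
        φ (Ideal.Quotient.mk (binomialEdgeIdeal K (G.induce W)) (X w)) =
          Ideal.Quotient.mk (binomialEdgeIdeal K G)
            (X (Sum.map Subtype.val Subtype.val w))) ∧
      (∀ w : ↥W ⊕ ↥W,
        ψ (Ideal.Quotient.mk (binomialEdgeIdeal K G)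
            (X (Sum.map Subtype.val Subtype.val w))) =
          Ideal.Quotient.mk (binomialEdgeIdeal K (G.induce W)) (X w)) ∧
      (∀ u : V ⊕ V, u ∉ Set.range (Sum.map (Subtype.val : ↥W → V) (Subtype.val : ↥W → V)) →
        ψ (Ideal.Quotient.mk (binomialEdgeIdeal K G) (X u)) = 0) ∧
      ψ.comp φ = AlgHom.id K _ := by
  classical
  set JH := binomialEdgeIdeal K (G.induce W) with hJH
  set JG := binomialEdgeIdeal K G with hJG
  -- forward map
  let f : MvPolynomial (↥W ⊕ ↥W) K →ₐ[K] MvPolynomial (V ⊕ V) K ⧸ JG :=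
    (Ideal.Quotient.mkₐ K JG).comp (rename (Sum.map Subtype.val Subtype.val))
  have hf : ∀ a ∈ JH, f a = 0 := by
    intro a ha
    have hle : JH ≤ RingHom.ker f.toRingHom := by
      rw [hJH, binomialEdgeIdeal, Ideal.span_le]
      rintro _ ⟨i, j, hadj, rfl⟩
      simp only [SetLike.mem_coe, RingHom.mem_ker]
      show f (X (Sum.inl i) * X (Sum.inr j) - X (Sum.inl j) * X (Sum.inr i)) = 0
      have : f (X (Sum.inl i) * X (Sum.inr j) - X (Sum.inl j) * X (Sum.inr i)) =
          Ideal.Quotient.mk JG (X (Sum.inl (i : V)) * X (Sum.inr (j : V)) -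
            X (Sum.inl (j : V)) * X (Sum.inr (i : V))) := by
        simp [f, map_sub, map_mul]
      rw [this, Ideal.Quotient.eq_zero_iff_mem]
      exact Ideal.subset_span ⟨(i : V), (j : V), hadj, rfl⟩
    exact hle ha
  let φ : (MvPolynomial (↥W ⊕ ↥W) K ⧸ JH) →ₐ[K] (MvPolynomial (V ⊕ V) K ⧸ JG) :=
    Ideal.Quotient.liftₐ JH f hf
  -- backward map
  let g : V ⊕ V → (MvPolynomial (↥W ⊕ ↥W) K ⧸ JH) := fun u =>
    match u with
    | Sum.inl v => if h : v ∈ W then Ideal.Quotient.mk JH (X (Sum.inl ⟨v, h⟩)) else 0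
    | Sum.inr v => if h : v ∈ W then Ideal.Quotient.mk JH (X (Sum.inr ⟨v, h⟩)) else 0
  let f' : MvPolynomial (V ⊕ V) K →ₐ[K] (MvPolynomial (↥W ⊕ ↥W) K ⧸ JH) := aeval g
  have hf' : ∀ a ∈ JG, f' a = 0 := by
    intro a ha
    have hle : JG ≤ RingHom.ker f'.toRingHom := by
      rw [hJG, binomialEdgeIdeal, Ideal.span_le]
      rintro _ ⟨i, j, hadj, rfl⟩
      simp only [SetLike.mem_coe, RingHom.mem_ker]
      show f' (X (Sum.inl i) * X (Sum.inr j) - X (Sum.inl j) * X (Sum.inr i)) = 0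
      have heval : f' (X (Sum.inl i) * X (Sum.inr j) - X (Sum.inl j) * X (Sum.inr i)) =
          g (Sum.inl i) * g (Sum.inr j) - g (Sum.inl j) * g (Sum.inr i) := by
        simp [f', map_sub, map_mul]
      rw [heval]
      by_cases hi : i ∈ W
      · by_cases hj : j ∈ W
        · simp only [g, dif_pos hi, dif_pos hj]
          rw [← map_mul, ← map_mul, ← map_sub, Ideal.Quotient.eq_zero_iff_mem]
          refine Ideal.subset_span ⟨⟨i, hi⟩, ⟨j, hj⟩, ?_, rfl⟩
          exact hadj
        · simp [g, dif_neg hj]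
      · simp [g, dif_neg hi]
    exact hle ha
  let ψ : (MvPolynomial (V ⊕ V) K ⧸ JG) →ₐ[K] (MvPolynomial (↥W ⊕ ↥W) K ⧸ JH) :=
    Ideal.Quotient.liftₐ JG f' hf'
  have hφX : ∀ w : ↥W ⊕ ↥W,
      φ (Ideal.Quotient.mk JH (X w)) =
        Ideal.Quotient.mk JG (X (Sum.map Subtype.val Subtype.val w)) := by
    intro w
    show f (X w) = _
    simp [f]
  have hψX : ∀ w : ↥W ⊕ ↥W,
      ψ (Ideal.Quotient.mk JG (X (Sum.map Subtype.val Subtype.val w))) =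
        Ideal.Quotient.mk JH (X w) := by
    intro w
    cases w with
    | inl a =>
        simp only [ψ, Sum.map_inl, Ideal.Quotient.liftₐ_apply, Ideal.Quotient.lift_mk]
        show f' (X (Sum.inl (a : V))) = _
        simp [f', g, dif_pos a.2]
    | inr a =>
        simp only [ψ, Sum.map_inr, Ideal.Quotient.liftₐ_apply, Ideal.Quotient.lift_mk]
        show f' (X (Sum.inr (a : V))) = _
        simp [f', g, dif_pos a.2]
  refine ⟨φ, ψ, hφX, hψX, ?_, ?_⟩
  · intro u hu
    have hψu : ψ (Ideal.Quotient.mk JG (X u)) = f' (X u) := by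
      simp [ψ]
      rfl
    rw [hψu]
    cases u with
    | inl v =>
        have hv : v ∉ W := fun h => hu ⟨Sum.inl ⟨v, h⟩, rfl⟩
        simp [f', g, dif_neg hv]
    | inr v =>
        have hv : v ∉ W := fun h => hu ⟨Sum.inr ⟨v, h⟩, rfl⟩
        simp [f', g, dif_neg hv]
  · apply Ideal.Quotient.algHom_ext
    apply MvPolynomial.algHom_ext
    intro w
    have : (ψ.comp φ) (Ideal.Quotient.mk JH (X w)) = Ideal.Quotient.mk JH (X w) := by
      rw [AlgHom.comp_apply, hφX w, hψX w]
    simpa using this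
end

section
/- Let C be the m-cycle (m ≥ 4) with binomial edge ideal J_C generated by f_i = f_{i,i+1} (indices mod m), and let ε: F = ⊕_{i=1}^m T e_i → J_C be the presentation sending e_i to f_i. Then the element g = Σ_{i=1}^m ((x_1···x_m)/(x_i x_{i+1})) e_i lies in the kernel of ε and is a minimal generator of ker ε. -/
open MvPolynomial

set_option synthInstance.maxHeartbeats 1000000
set_option maxHeartbeats 1000000

/-- The edge binomial `f_{i,i+1} = x_i y_{i+1} - x_{i+1} y_i` of the `m`-cycle
(indices mod `m`), in `T = K[x_i, y_i : i ∈ ZMod m]`. -/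
noncomputable def cycleBinomial (K : Type*) [Field K] (m : ℕ) (i : ZMod m) :
    MvPolynomial (ZMod m ⊕ ZMod m) K :=
  X (Sum.inl i) * X (Sum.inr (i + 1)) - X (Sum.inl (i + 1)) * X (Sum.inr i)

namespace Stmt7Aux

variable {K : Type*} [Field K] {m : ℕ}

lemma natCast_ne_zero [NeZero m] {a : ℕ} (h0 : 0 < a) (hlt : a < m) : (a : ZMod m) ≠ 0 := by
  rw [Ne, ZMod.natCast_eq_zero_iff]
  intro hdvd
  exact absurd (Nat.le_of_dvd h0 hdvd) (by omega)

lemma one_ne [NeZero m] (hm : 4 ≤ m) : (1 : ZMod m) ≠ 0 := by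
  have := natCast_ne_zero (m := m) (a := 1) one_pos (by omega)
  simpa using this

lemma two_ne [NeZero m] (hm : 4 ≤ m) : (2 : ZMod m) ≠ 0 := by
  have := natCast_ne_zero (m := m) (a := 2) two_pos (by omega)
  simpa using this

/-- the product of all x-variables except `x_i`. -/
noncomputable def P (K : Type*) [Field K] (m : ℕ) [NeZero m] (i : ZMod m) :
    MvPolynomial (ZMod m ⊕ ZMod m) K :=
  ∏ j ∈ Finset.univ.filter (fun j : ZMod m => j ≠ i), X (Sum.inl j)

/-- the components of the syzygy `g`. -/
noncomputable def G (K : Type*) [Field K] (m : ℕ) [NeZero m] (i : ZMod m) :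
    MvPolynomial (ZMod m ⊕ ZMod m) K :=
  ∏ j ∈ Finset.univ.filter (fun j : ZMod m => j ≠ i ∧ j ≠ i + 1), X (Sum.inl j)

lemma G_mul_left [NeZero m] (hm : 4 ≤ m) (i : ZMod m) :
    G K m i * X (Sum.inl i) = P K m (i + 1) := by
  have h1 : i ≠ i + 1 := by
    simp [left_eq_add, one_ne hm]
  have hins : Finset.univ.filter (fun j : ZMod m => j ≠ i + 1)
      = insert i (Finset.univ.filter (fun j : ZMod m => j ≠ i ∧ j ≠ i + 1)) := by
    ext j
    simp only [Finset.mem_filter, Finset.mem_univ, true_and, Finset.mem_insert]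
    constructor
    · intro hj
      rcases eq_or_ne j i with h | h
      · exact Or.inl h
      · exact Or.inr ⟨h, hj⟩
    · rintro (rfl | ⟨-, h⟩)
      · exact h1
      · exact h
  have hnot : i ∉ Finset.univ.filter (fun j : ZMod m => j ≠ i ∧ j ≠ i + 1) := by simp
  rw [P, hins, Finset.prod_insert hnot, mul_comm, G]

lemma G_mul_right [NeZero m] (hm : 4 ≤ m) (i : ZMod m) :
    G K m i * X (Sum.inl (i + 1)) = P K m i := by
  have h1 : i + 1 ≠ i := by
    simp [add_eq_left, one_ne hm]
  have hins : Finset.univ.filter (fun j : ZMod m => j ≠ i)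
      = insert (i + 1) (Finset.univ.filter (fun j : ZMod m => j ≠ i ∧ j ≠ i + 1)) := by
    ext j
    simp only [Finset.mem_filter, Finset.mem_univ, true_and, Finset.mem_insert]
    constructor
    · intro hj
      rcases eq_or_ne j (i + 1) with h | h
      · exact Or.inl h
      · exact Or.inr ⟨hj, h⟩
    · rintro (rfl | ⟨h, -⟩)
      · exact h1
      · exact h
  have hnot : i + 1 ∉ Finset.univ.filter (fun j : ZMod m => j ≠ i ∧ j ≠ i + 1) := by simp
  rw [P, hins, Finset.prod_insert hnot, mul_comm, G]

lemma kernel_sum [NeZero m] (hm : 4 ≤ m) :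
    ∑ i : ZMod m, G K m i * cycleBinomial K m i = 0 := by
  have step : ∀ i : ZMod m, G K m i * cycleBinomial K m i
      = P K m (i + 1) * X (Sum.inr (i + 1)) - P K m i * X (Sum.inr i) := by
    intro i
    rw [cycleBinomial, mul_sub, ← mul_assoc, ← mul_assoc, G_mul_left hm, G_mul_right hm]
  rw [Finset.sum_congr rfl fun i _ => step i, Finset.sum_sub_distrib, sub_eq_zero]
  exact Fintype.sum_equiv (Equiv.addRight (1 : ZMod m)) _ _ (fun i => rfl)

lemma rec_lemma [NeZero m] (hm : 4 ≤ m) (k : ZMod m → MvPolynomial (ZMod m ⊕ ZMod m) K)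
    (hk : ∑ i : ZMod m, k i * cycleBinomial K m i = 0)
    (π : (ZMod m ⊕ ZMod m) →₀ ℕ) (hπ : ∀ j, π (Sum.inr j) = 0) (n : ZMod m) :
    coeff π (k n) = if π (Sum.inl (n + 2)) = 0 then 0
      else coeff (π + Finsupp.single (Sum.inl n) 1 - Finsupp.single (Sum.inl (n + 2)) 1)
        (k (n + 1)) := by
  classical
  set M : (ZMod m ⊕ ZMod m) →₀ ℕ :=
    (π + Finsupp.single (Sum.inl n) 1) + Finsupp.single (Sum.inr (n + 1)) 1 with hM
  have hMr : ∀ j : ZMod m, M (Sum.inr j) = if n + 1 = j then 1 else 0 := by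
    intro j
    simp [hM, Finsupp.add_apply, Finsupp.single_apply, hπ j]
  have h0 : coeff M (∑ i : ZMod m, k i * cycleBinomial K m i) = 0 := by rw [hk]; simp
  rw [coeff_sum] at h0
  have hterm : ∀ i : ZMod m, coeff M (k i * cycleBinomial K m i)
      = coeff M (k i * X (Sum.inl i) * X (Sum.inr (i + 1)))
        - coeff M (k i * X (Sum.inl (i + 1)) * X (Sum.inr i)) := by
    intro i
    rw [cycleBinomial, mul_sub, coeff_sub, ← mul_assoc, ← mul_assoc]
  rw [Finset.sum_congr rfl fun i _ => hterm i, Finset.sum_sub_distrib] at h0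
  have hA : ∀ i : ZMod m, coeff M (k i * X (Sum.inl i) * X (Sum.inr (i + 1)))
      = if i = n then coeff π (k n) else 0 := by
    intro i
    rw [coeff_mul_X']
    rcases eq_or_ne i n with rfl | hne
    · rw [if_pos, if_pos rfl]
      · have hsub : M - Finsupp.single (Sum.inr (i + 1)) 1 = π + Finsupp.single (Sum.inl i) 1 := by
          rw [hM, add_tsub_cancel_right]
        rw [hsub, coeff_mul_X', if_pos, add_tsub_cancel_right]
        simp [Finsupp.mem_support_iff, Finsupp.add_apply, Finsupp.single_apply]
      · simp [Finsupp.mem_support_iff, hMr]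
    · rw [if_neg, if_neg hne]
      simp only [Finsupp.mem_support_iff, hMr, ne_eq, not_not]
      rw [if_neg]
      intro h
      exact hne (add_right_cancel h.symm)
  have hB : ∀ i : ZMod m, coeff M (k i * X (Sum.inl (i + 1)) * X (Sum.inr i))
      = if i = n + 1 then (if π (Sum.inl (n + 2)) = 0 then 0
          else coeff (π + Finsupp.single (Sum.inl n) 1 - Finsupp.single (Sum.inl (n + 2)) 1)
            (k (n + 1))) else 0 := by
    intro i
    rw [coeff_mul_X']
    rcases eq_or_ne i (n + 1) with rfl | hne
    · rw [if_pos, if_pos rfl]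
      · have hsub : M - Finsupp.single (Sum.inr (n + 1)) 1 = π + Finsupp.single (Sum.inl n) 1 := by
          rw [hM, add_tsub_cancel_right]
        rw [hsub, coeff_mul_X']
        have hnn2 : Sum.inl n ≠ (Sum.inl (n + 1 + 1) : ZMod m ⊕ ZMod m) := by
          simp only [ne_eq, Sum.inl.injEq]
          intro h
          apply two_ne hm
          have h2 : n + (1 + 1) = n + 0 := by rw [← add_assoc, ← h, add_zero]
          have h3 := add_left_cancel h2
          rw [← one_add_one_eq_two]
          exact h3
        have h21 : (n + 1 + 1 : ZMod m) = n + 2 := by ring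
        have hval : ((π + Finsupp.single (Sum.inl n) 1 : (ZMod m ⊕ ZMod m) →₀ ℕ))
              (Sum.inl (n + 1 + 1)) = π (Sum.inl (n + 2)) := by
          rw [Finsupp.add_apply, Finsupp.single_apply, if_neg hnn2, add_zero, h21]
        by_cases hz : π (Sum.inl (n + 2)) = 0
        · have hns : Sum.inl (n + 1 + 1)
              ∉ (π + Finsupp.single (Sum.inl n) 1).support := by
            rw [Finsupp.mem_support_iff, not_not, hval]
            exact hz
          rw [if_neg hns, if_pos hz]
        · have hs : Sum.inl (n + 1 + 1)
              ∈ (π + Finsupp.single (Sum.inl n) 1).support := by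
            rw [Finsupp.mem_support_iff, hval]
            exact hz
          rw [if_pos hs, if_neg hz, h21]
      · simp [Finsupp.mem_support_iff, hMr]
    · rw [if_neg, if_neg hne]
      simp only [Finsupp.mem_support_iff, hMr, ne_eq, not_not]
      rw [if_neg]
      intro h
      exact hne h.symm
  rw [Finset.sum_congr rfl fun i _ => hA i, Finset.sum_congr rfl fun i _ => hB i,
    Finset.sum_ite_eq' Finset.univ n, Finset.sum_ite_eq' Finset.univ (n + 1)] at h0
  simp only [Finset.mem_univ, if_true] at h0
  exact sub_eq_zero.mp h0

lemma vanish_aux [NeZero m] (hm : 4 ≤ m) (k : ZMod m → MvPolynomial (ZMod m ⊕ ZMod m) K)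
    (hk : ∑ i : ZMod m, k i * cycleBinomial K m i = 0) :
    ∀ j : ℕ, j + 3 ≤ m → ∀ n : ZMod m, ∀ π : (ZMod m ⊕ ZMod m) →₀ ℕ,
      (∀ l, π (Sum.inr l) = 0) → π (Sum.inl (n + 2 + (j : ZMod m))) = 0 →
      coeff π (k n) = 0 := by
  intro j
  induction j with
  | zero =>
    intro hj n π hπ hz
    rw [rec_lemma hm k hk π hπ n, if_pos]
    simpa using hz
  | succ j ih =>
    intro hj n π hπ hz
    rw [rec_lemma hm k hk π hπ n]
    split_ifs with h
    · rfl
    · set π' : (ZMod m ⊕ ZMod m) →₀ ℕ :=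
        π + Finsupp.single (Sum.inl n) 1 - Finsupp.single (Sum.inl (n + 2)) 1 with hπ'
      have hπ'r : ∀ l, π' (Sum.inr l) = 0 := by
        intro l
        rw [hπ', Finsupp.tsub_apply, Finsupp.add_apply, hπ l]
        simp [Finsupp.single_apply]
      have key : (n + 1) + 2 + (j : ZMod m) = n + 2 + ((j + 1 : ℕ) : ZMod m) := by
        push_cast
        ring
      have hne1 : Sum.inl ((n + 1) + 2 + (j : ZMod m)) ≠ (Sum.inl n : ZMod m ⊕ ZMod m) := by
        simp only [ne_eq, Sum.inl.injEq]
        intro hc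
        have h2 : n + ((3 + j : ℕ) : ZMod m) = n + 0 := by
          push_cast
          linear_combination hc
        exact natCast_ne_zero (m := m) (by omega) (by omega) (add_left_cancel h2)
      have hne2 : Sum.inl ((n + 1) + 2 + (j : ZMod m)) ≠ (Sum.inl (n + 2) : ZMod m ⊕ ZMod m) := by
        simp only [ne_eq, Sum.inl.injEq]
        intro hc
        have h2 : (n + 2) + ((j + 1 : ℕ) : ZMod m) = (n + 2) + 0 := by
          push_cast
          linear_combination hc
        exact natCast_ne_zero (m := m) (by omega) (by omega) (add_left_cancel h2)
      have hz' : π' (Sum.inl ((n + 1) + 2 + (j : ZMod m))) = 0 := by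
        rw [hπ', Finsupp.tsub_apply, Finsupp.add_apply, Finsupp.single_apply,
          Finsupp.single_apply, if_neg (Ne.symm hne1), if_neg (Ne.symm hne2), add_zero,
          Nat.sub_zero, key]
        exact hz
      exact ih (by omega) (n + 1) π' hπ'r hz'

lemma vanish [NeZero m] (hm : 4 ≤ m) (k : ZMod m → MvPolynomial (ZMod m ⊕ ZMod m) K)
    (hk : ∑ i : ZMod m, k i * cycleBinomial K m i = 0)
    (π : (ZMod m ⊕ ZMod m) →₀ ℕ) (hπ : ∀ l, π (Sum.inr l) = 0)
    (hdeg : (π.sum fun _ e => e) + 3 ≤ m) (n : ZMod m) :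
    coeff π (k n) = 0 := by
  by_contra hne
  have hall : ∀ j : ℕ, j + 3 ≤ m → π (Sum.inl (n + 2 + (j : ZMod m))) ≠ 0 := by
    intro j hj hz
    exact hne (vanish_aux hm k hk j hj n π hπ hz)
  have hmaps : ∀ j ∈ Finset.range (m - 2),
      (Sum.inl (n + 2 + (j : ZMod m)) : ZMod m ⊕ ZMod m) ∈ π.support := by
    intro j hj
    rw [Finset.mem_range] at hj
    rw [Finsupp.mem_support_iff]
    exact hall j (by omega)
  have hinj : Set.InjOn (fun j : ℕ => (Sum.inl (n + 2 + (j : ZMod m)) : ZMod m ⊕ ZMod m))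
      (Finset.range (m - 2)) := by
    intro j₁ h₁ j₂ h₂ heq
    simp only [Finset.coe_range, Set.mem_Iio] at h₁ h₂
    simp only [Sum.inl.injEq] at heq
    have hcast : (j₁ : ZMod m) = (j₂ : ZMod m) := by
      have := add_left_cancel heq
      exact this
    have hval := congrArg ZMod.val hcast
    rwa [ZMod.val_cast_of_lt (by omega), ZMod.val_cast_of_lt (by omega)] at hval
  have hcard : m - 2 ≤ π.support.card := by
    have := Finset.card_le_card_of_injOn _ hmaps hinj
    simpa using this
  have hsum : π.support.card ≤ π.sum fun _ e => e := by
    rw [Finsupp.sum, Finset.card_eq_sum_ones]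
    refine Finset.sum_le_sum fun a ha => ?_
    rw [Finsupp.mem_support_iff] at ha
    omega
  omega

/-- degree as an additive hom. -/
noncomputable def degHom (m : ℕ) : ((ZMod m ⊕ ZMod m) →₀ ℕ) →+ ℕ where
  toFun π := π.sum fun _ e => e
  map_zero' := Finsupp.sum_zero_index
  map_add' a b := by
    show (a + b).sum (fun _ e => e) = a.sum (fun _ e => e) + b.sum (fun _ e => e)
    exact Finsupp.sum_add_index' (fun _ => rfl) (fun _ _ _ => rfl)

lemma prod_X_single {ι : Type*} (f : ι → ZMod m ⊕ ZMod m) (s : Finset ι) :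
    (∏ j ∈ s, (X (f j) : MvPolynomial (ZMod m ⊕ ZMod m) K))
      = monomial (∑ j ∈ s, Finsupp.single (f j) 1) 1 := by
  classical
  induction s using Finset.induction with
  | empty => simp
  | insert _ _ hnot ih =>
    rw [Finset.prod_insert hnot, Finset.sum_insert hnot, ih]
    rw [show (X (f _) : MvPolynomial (ZMod m ⊕ ZMod m) K) = monomial (Finsupp.single (f _) 1) 1
      from by rw [← X_pow_eq_monomial, pow_one], monomial_mul, one_mul]

end Stmt7Aux

/-- Let `ε : F = ⊕_{i} T e_i → J_C`, `e_i ↦ f_{i,i+1}`, be the free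
presentation of the binomial edge ideal of the `m`-cycle (`m ≥ 4`).  Then
`g = Σ_i ((x_1 ⋯ x_m)/(x_i x_{i+1})) e_i` lies in `ker ε` and is a minimal generator of
`ker ε`, i.e. `g ∉ m·ker ε` where `m = (x_i, y_i : i)` is the graded maximal ideal. -/
theorem stmt_7 {K : Type*} [Field K] (m : ℕ) (hm : 4 ≤ m) [NeZero m] :
    letI T := MvPolynomial (ZMod m ⊕ ZMod m) K
    letI ε : (ZMod m → T) →ₗ[T] T :=
      Fintype.linearCombination T (cycleBinomial K m)
    letI g : ZMod m → T := fun i =>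
      ∏ j ∈ Finset.univ.filter (fun j : ZMod m => j ≠ i ∧ j ≠ i + 1), X (Sum.inl j)
    g ∈ LinearMap.ker ε ∧
      g ∉ (Ideal.span (Set.range (X : ZMod m ⊕ ZMod m → T)) • LinearMap.ker ε :
        Submodule T (ZMod m → T)) := by
  classical
  constructor
  · rw [LinearMap.mem_ker, Fintype.linearCombination_apply]
    simp only [smul_eq_mul]
    exact Stmt7Aux.kernel_sum (K := K) (m := m) hm
  · intro hg
    set S : Finset (ZMod m) :=
      Finset.univ.filter (fun j : ZMod m => j ≠ (0 : ZMod m) ∧ j ≠ 1) with hS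
    set μ : (ZMod m ⊕ ZMod m) →₀ ℕ := ∑ j ∈ S, Finsupp.single (Sum.inl j) 1 with hμ
    have h01 : (0 : ZMod m) ≠ 1 := Ne.symm (Stmt7Aux.one_ne hm)
    have hcardS : S.card = m - 2 := by
      have hSeq : S = Finset.univ \ {(0 : ZMod m), 1} := by
        ext j
        simp [hS]
      rw [hSeq, Finset.card_sdiff_of_subset (Finset.subset_univ _), Finset.card_univ, ZMod.card,
        Finset.card_pair h01]
    have hμr : ∀ l : ZMod m, μ (Sum.inr l) = 0 := by
      intro l
      rw [hμ, Finsupp.finset_sum_apply]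
      refine Finset.sum_eq_zero fun j _ => ?_
      simp [Finsupp.single_apply]
    have hdegμ : Stmt7Aux.degHom m μ = m - 2 := by
      rw [hμ, map_sum, ← hcardS, Finset.card_eq_sum_ones]
      refine Finset.sum_congr rfl fun j _ => ?_
      show (Finsupp.single (Sum.inl j) 1).sum (fun _ e => e) = 1
      rw [Finsupp.sum_single_index]
      rfl
    have hIzero : ∀ r ∈ Ideal.span (Set.range
        (X : ZMod m ⊕ ZMod m → MvPolynomial (ZMod m ⊕ ZMod m) K)),
        coeff (0 : (ZMod m ⊕ ZMod m) →₀ ℕ) r = 0 := by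
      intro r hr
      have hle : Ideal.span (Set.range
          (X : ZMod m ⊕ ZMod m → MvPolynomial (ZMod m ⊕ ZMod m) K))
          ≤ RingHom.ker (constantCoeff (R := K) (σ := ZMod m ⊕ ZMod m)) := by
        rw [Ideal.span_le]
        rintro _ ⟨s, rfl⟩
        simp [RingHom.mem_ker]
      have hmem := hle hr
      rw [RingHom.mem_ker] at hmem
      simpa [MvPolynomial.constantCoeff_eq] using hmem
    have hzero : coeff μ ((fun i : ZMod m =>
        ∏ j ∈ Finset.univ.filter (fun j : ZMod m => j ≠ i ∧ j ≠ i + 1),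
          (X (Sum.inl j) : MvPolynomial (ZMod m ⊕ ZMod m) K)) 0) = 0 := by
      refine Submodule.smul_induction_on hg ?_ ?_
      · intro r hr k hk
        rw [Pi.smul_apply, smul_eq_mul, coeff_mul]
        refine Finset.sum_eq_zero fun p hp => ?_
        rw [Finset.HasAntidiagonal.mem_antidiagonal] at hp
        by_cases hp0 : p.1 = 0
        · rw [hp0, hIzero r hr, zero_mul]
        · rw [LinearMap.mem_ker, Fintype.linearCombination_apply] at hk
          simp only [smul_eq_mul] at hk
          have hπ2 : ∀ l : ZMod m, p.2 (Sum.inr l) = 0 := by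
            intro l
            have := congrArg (fun f : (ZMod m ⊕ ZMod m) →₀ ℕ => f (Sum.inr l)) hp
            simp only [Finsupp.add_apply] at this
            have hμl := hμr l
            omega
          have hdeg1 : 1 ≤ Stmt7Aux.degHom m p.1 := by
            by_contra hlt
            push_neg at hlt
            apply hp0
            have hz : Stmt7Aux.degHom m p.1 = 0 := by omega
            ext a
            simp only [Finsupp.coe_zero, Pi.zero_apply]
            by_cases ha : a ∈ p.1.support
            · have hsup : ∑ x ∈ p.1.support, p.1 x = 0 := hz
              exact (Finset.sum_eq_zero_iff.mp hsup) a ha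
            · rw [Finsupp.notMem_support_iff] at ha
              exact ha
          have hdegsum : Stmt7Aux.degHom m p.1 + Stmt7Aux.degHom m p.2 = m - 2 := by
            rw [← map_add, hp, hdegμ]
          have hdeg2 : (p.2.sum fun _ e => e) + 3 ≤ m := by
            have : Stmt7Aux.degHom m p.2 = p.2.sum fun _ e => e := rfl
            omega
          rw [Stmt7Aux.vanish hm k hk p.2 hπ2 hdeg2 0, mul_zero]
      · intro x y hx hy
        rw [Pi.add_apply, coeff_add, hx, hy, add_zero]
    have hone : coeff μ ((fun i : ZMod m =>
        ∏ j ∈ Finset.univ.filter (fun j : ZMod m => j ≠ i ∧ j ≠ i + 1),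
          (X (Sum.inl j) : MvPolynomial (ZMod m ⊕ ZMod m) K)) 0) = 1 := by
      have h0add : ((0 : ZMod m) + 1) = 1 := zero_add 1
      simp only [h0add]
      rw [show Finset.univ.filter (fun j : ZMod m => j ≠ (0 : ZMod m) ∧ j ≠ 1) = S from rfl]
      rw [Stmt7Aux.prod_X_single, ← hμ, coeff_monomial, if_pos rfl]
    rw [hone] at hzero
    exact one_ne_zero hzero
end

section
/- Let G be a chordal, claw-free graph whose clique complex Δ(G) admits a leaf order F_1,...,F_r such that for each i > 1 the facet F_i intersects each of its branches in exactly one vertex. If F_{r−1} is a branch of F_r with F_r ∩ F_{r−1} = {v}, then v is a free vertex of the graph G' with clique complex ⟨F_1,...,F_{r−1}⟩. -/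
/-- `F` is a maximal clique of `G` (as a finite set of vertices). -/
def IsMaximalCliqueF {V : Type*} (G : SimpleGraph V) (F : Finset V) : Prop :=
  G.IsClique ↑F ∧ ∀ F' : Finset V, G.IsClique ↑F' → F ⊆ F' → F' = F

/-- `F j` is a branch of `F i` in the order `F`. -/
def IsBranch {V : Type*} [DecidableEq V] {r : ℕ} (F : Fin r → Finset V)
    (i j : Fin r) : Prop :=
  j < i ∧ ∀ l, l < i → F l ∩ F i ⊆ F j ∩ F i

/-- `F₁, …, F_r` is a leaf order of the facets of the clique complex `Δ(G)`. -/
def IsLeafOrder {V : Type*} [DecidableEq V] (G : SimpleGraph V) {r : ℕ}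
    (F : Fin r → Finset V) : Prop :=
  Function.Injective F ∧ (∀ i, IsMaximalCliqueF G (F i)) ∧
    (∀ C : Finset V, IsMaximalCliqueF G C → ∃ i, F i = C) ∧
    ∀ i : Fin r, 0 < (i : ℕ) → ∃ j, IsBranch F i j

/-- `G` is chordal: every cycle of length at least 4 has a chord. -/
def IsChordal {V : Type*} (G : SimpleGraph V) : Prop :=
  ∀ ⦃v : V⦄ (p : G.Walk v v), p.IsCycle → 4 ≤ p.length →
    ∃ a b, a ∈ p.support ∧ b ∈ p.support ∧ G.Adj a b ∧ s(a, b) ∉ p.edges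

/-- `G` is claw free. -/
def ClawFree {V : Type*} (G : SimpleGraph V) : Prop :=
  ¬ ∃ a b c d : V, b ≠ c ∧ b ≠ d ∧ c ≠ d ∧
    G.Adj a b ∧ G.Adj a c ∧ G.Adj a d ∧ ¬ G.Adj b c ∧ ¬ G.Adj b d ∧ ¬ G.Adj c d

/-- `s` is a maximal clique of `G`. -/
def IsMaximalClique {V : Type*} (G : SimpleGraph V) (s : Set V) : Prop :=
  G.IsClique s ∧ ∀ t : Set V, G.IsClique t → s ⊆ t → t = s

/-- `v` is a *free vertex* of `G`: it belongs to exactly one maximal clique of `G`. -/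
def IsFreeVertex {V : Type*} (G : SimpleGraph V) (v : V) : Prop :=
  ∃! s : Set V, IsMaximalClique G s ∧ v ∈ s

/-- The graph with clique complex `⟨F₁, …, F_{r-1}⟩`, i.e. the 1-skeleton of the complex
generated by all the facets except the last one. -/
def skeletonGraph {V : Type*} {r : ℕ} (F : Fin r → Finset V) : SimpleGraph V :=
  SimpleGraph.fromRel fun a b => ∃ j : Fin r, (j : ℕ) < r - 1 ∧ a ∈ F j ∧ b ∈ F j

/-- Every clique of a graph on a finite vertex set extends to a maximal clique. -/
lemma exists_maximal_clique_ext {V : Type*} [Fintype V] [DecidableEq V] (G : SimpleGraph V)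
    (C : Finset V) (hC : G.IsClique ↑C) : ∃ M, IsMaximalCliqueF G M ∧ C ⊆ M := by
  obtain ⟨M, hM, hmax⟩ := Set.Finite.exists_maximalFor Finset.card
    {F' : Finset V | G.IsClique ↑F' ∧ C ⊆ F'} (Set.toFinite _) ⟨C, hC, Finset.Subset.refl C⟩
  refine ⟨M, ⟨hM.1, ?_⟩, hM.2⟩
  intro F' hF' hMF'
  have hmem : F' ∈ {F' : Finset V | G.IsClique ↑F' ∧ C ⊆ F'} := ⟨hF', hM.2.trans hMF'⟩
  have hc := hmax hmem (Finset.card_le_card hMF')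
  exact (Finset.eq_of_subset_of_card_le hMF' hc).symm

/-- Let `G` be a chordal, claw-free graph whose clique complex admits
a leaf order `F₁, …, F_r` (`r ≥ 2`) in which each facet meets each of its branches in
exactly one vertex.  If `F_{r-1}` is a branch of `F_r` and `F_r ∩ F_{r-1} = {v}`, then
`v` is a free vertex of the graph `G'` with clique complex `⟨F₁, …, F_{r-1}⟩`. -/
theorem stmt_13 {V : Type*} [Fintype V] [DecidableEq V]
    (G : SimpleGraph V) (hch : IsChordal G) (hcf : ClawFree G)
    {r : ℕ} (hr : 2 ≤ r) (F : Fin r → Finset V) (hF : IsLeafOrder G F)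
    (hone : ∀ i j, IsBranch F i j → (F j ∩ F i).card = 1)
    (v : V)
    (hbr : IsBranch F ⟨r - 1, by omega⟩ ⟨r - 2, by omega⟩)
    (hv : F ⟨r - 1, by omega⟩ ∩ F ⟨r - 2, by omega⟩ = {v}) :
    IsFreeVertex (skeletonGraph F) v := by
  obtain ⟨hinj, hmaxc, hsurj, -⟩ := hF
  have hr1 : r - 2 < r - 1 := by omega
  have hvboth : v ∈ F ⟨r - 1, by omega⟩ ∩ F ⟨r - 2, by omega⟩ := by
    rw [hv]; exact Finset.mem_singleton_self v
  have hvlast : v ∈ F ⟨r - 1, by omega⟩ := (Finset.mem_inter.mp hvboth).1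
  have hvprev : v ∈ F ⟨r - 2, by omega⟩ := (Finset.mem_inter.mp hvboth).2
  -- any vertex in both `F l` (l < last) and `F last` is `v`
  have hsub : ∀ l : Fin r, (l : ℕ) < r - 1 → ∀ x, x ∈ F l → x ∈ F ⟨r - 1, by omega⟩ → x = v := by
    intro l hl x h1 h2
    have hlt : l < (⟨r - 1, by omega⟩ : Fin r) := by simp only [Fin.lt_def]; exact hl
    have h3 := hbr.2 l hlt (Finset.mem_inter.mpr ⟨h1, h2⟩)
    rw [Finset.inter_comm, hv] at h3
    exact Finset.mem_singleton.mp h3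
  -- the skeleton graph is a subgraph of G
  have hGle : ∀ {x y : V}, (skeletonGraph F).Adj x y → G.Adj x y := by
    intro x y hxy
    simp only [skeletonGraph, SimpleGraph.fromRel_adj] at hxy
    obtain ⟨hne, hco⟩ := hxy
    rcases hco with ⟨j, -, hx, hy⟩ | ⟨j, -, hy, hx⟩
    · exact (hmaxc j).1 (Finset.mem_coe.mpr hx) (Finset.mem_coe.mpr hy) hne
    · exact (hmaxc j).1 (Finset.mem_coe.mpr hx) (Finset.mem_coe.mpr hy) hne
  -- each of the first r-1 facets is a clique of the skeleton graph
  have hClG' : ∀ i : Fin r, (i : ℕ) < r - 1 → (skeletonGraph F).IsClique ↑(F i) := by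
    intro i hi x hx y hy hxy
    simp only [skeletonGraph, SimpleGraph.fromRel_adj]
    exact ⟨hxy, Or.inl ⟨i, hi, Finset.mem_coe.mp hx, Finset.mem_coe.mp hy⟩⟩
  -- KEY: the only facet among the first r-1 containing v is F ⟨r-2⟩
  have key : ∀ k : Fin r, (k : ℕ) < r - 1 → v ∈ F k → F k = F ⟨r - 2, by omega⟩ := by
    intro k hk hvk
    by_contra hne
    -- get b ∈ F ⟨r-2⟩ \ F k
    have hAB : ¬ (F ⟨r - 2, by omega⟩ ⊆ F k) :=
      fun h => hne ((hmaxc ⟨r - 2, by omega⟩).2 (F k) (hmaxc k).1 h)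
    obtain ⟨b, hbB, hbA⟩ := Finset.not_subset.mp hAB
    -- get a ∈ F k not adjacent to b
    have hab : ∃ a ∈ F k, ¬ G.Adj a b := by
      by_contra h
      push_neg at h
      have hcl : G.IsClique ↑(insert b (F k)) := by
        intro x hx y hy hxy
        rw [Finset.coe_insert, Set.mem_insert_iff] at hx hy
        rcases hx with rfl | hx
        · rcases hy with rfl | hy
          · exact absurd rfl hxy
          · exact (h y (Finset.mem_coe.mp hy)).symm
        · rcases hy with rfl | hy
          · exact h x (Finset.mem_coe.mp hx)
          · exact (hmaxc k).1 hx hy hxy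
      have heq := (hmaxc k).2 _ hcl (Finset.subset_insert _ _)
      exact hbA (heq ▸ Finset.mem_insert_self b (F k))
    obtain ⟨a, haA, hnab⟩ := hab
    have hvb : v ≠ b := fun h => hbA (h ▸ hvk)
    have hvBadj : G.Adj v b :=
      (hmaxc ⟨r - 2, by omega⟩).1 (Finset.mem_coe.mpr hvprev) (Finset.mem_coe.mpr hbB) hvb
    have hav : a ≠ v := fun h => hnab (by rw [h]; exact hvBadj)
    have habne : a ≠ b := fun h => hbA (h ▸ haA)
    have haB : a ∉ F ⟨r - 2, by omega⟩ := fun h =>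
      hnab ((hmaxc ⟨r - 2, by omega⟩).1 (Finset.mem_coe.mpr h) (Finset.mem_coe.mpr hbB) habne)
    -- get c ∈ F last with c ≠ v
    have hc : ∃ c ∈ F ⟨r - 1, by omega⟩, c ≠ v := by
      by_contra h
      push_neg at h
      have hsub' : F ⟨r - 1, by omega⟩ ⊆ F k := fun x hx => by rw [h x hx]; exact hvk
      have heq := (hmaxc ⟨r - 1, by omega⟩).2 (F k) (hmaxc k).1 hsub'
      have := hinj heq
      have : (k : ℕ) = r - 1 := congrArg Fin.val this
      omega
    obtain ⟨c, hcL, hcv⟩ := hc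
    have hcA : c ∉ F k := fun h => hcv (hsub k hk c h hcL)
    have hcB : c ∉ F ⟨r - 2, by omega⟩ := fun h => hcv (hsub ⟨r - 2, by omega⟩ hr1 c h hcL)
    have hvc : G.Adj v c :=
      (hmaxc ⟨r - 1, by omega⟩).1 (Finset.mem_coe.mpr hvlast) (Finset.mem_coe.mpr hcL) (Ne.symm hcv)
    have hva : G.Adj v a :=
      (hmaxc k).1 (Finset.mem_coe.mpr hvk) (Finset.mem_coe.mpr haA) (Ne.symm hav)
    -- vertices of the first r-1 facets (other than v) are not adjacent to c
    have main : ∀ l : Fin r, (l : ℕ) < r - 1 → v ∈ F l →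
        ∀ x, x ∈ F l → x ≠ v → ¬ G.Adj x c := by
      intro l hl hvl x hxl hxv hadj
      have hvx : G.Adj v x :=
        (hmaxc l).1 (Finset.mem_coe.mpr hvl) (Finset.mem_coe.mpr hxl) (Ne.symm hxv)
      have hcl : G.IsClique ↑({v, x, c} : Finset V) := by
        intro p hp q hq hpq
        simp only [Finset.coe_insert, Finset.coe_singleton, Set.mem_insert_iff,
          Set.mem_singleton_iff] at hp hq
        rcases hp with rfl | rfl | rfl <;> rcases hq with rfl | rfl | rfl <;>
          first
          | exact absurd rfl hpq
          | exact hvx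
          | exact hvc
          | exact hadj
          | exact hvx.symm
          | exact hvc.symm
          | exact hadj.symm
      obtain ⟨M, hM, hCM⟩ := exists_maximal_clique_ext G {v, x, c} hcl
      obtain ⟨i0, hi0⟩ := hsurj M hM
      have hxM : x ∈ F i0 := by rw [hi0]; exact hCM (by simp)
      have hcM : c ∈ F i0 := by rw [hi0]; exact hCM (by simp)
      rcases lt_or_ge (i0 : ℕ) (r - 1) with h1 | h1
      · exact hcv (hsub i0 h1 c hcM hcL)
      · have hieq : i0 = (⟨r - 1, by omega⟩ : Fin r) := Fin.ext (show (i0 : ℕ) = r - 1 by have := i0.isLt; omega)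
        rw [hieq] at hxM
        exact hxv (hsub l hl x hxl hxM)
    have hnac : ¬ G.Adj a c := main k hk hvk a haA hav
    have hnbc : ¬ G.Adj b c :=
      main ⟨r - 2, by omega⟩ hr1 hvprev b hbB (fun h => hbA (h ▸ hvk))
    exact hcf ⟨v, a, b, c, habne, fun h => hcA (h ▸ haA), fun h => hcB (h ▸ hbB),
      hva, hvBadj, hvc, hnab, hnac, hnbc⟩
  -- now prove v is free in the skeleton graph, with unique clique ↑(F ⟨r-2⟩)
  refine ⟨↑(F ⟨r - 2, by omega⟩), ⟨⟨hClG' _ hr1, ?_⟩, Finset.mem_coe.mpr hvprev⟩, ?_⟩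
  · -- maximality of ↑(F ⟨r-2⟩) in the skeleton graph
    intro t ht hsubt
    have htG : G.IsClique t := fun x hx y hy hxy => hGle (ht hx hy hxy)
    have hfin : t.Finite := Set.toFinite t
    have h1 : G.IsClique ↑hfin.toFinset := by rw [Set.Finite.coe_toFinset]; exact htG
    have h2 : F ⟨r - 2, by omega⟩ ⊆ hfin.toFinset :=
      fun x hx => hfin.mem_toFinset.mpr (hsubt (Finset.mem_coe.mpr hx))
    have h3 := (hmaxc ⟨r - 2, by omega⟩).2 _ h1 h2
    calc t = ↑hfin.toFinset := (Set.Finite.coe_toFinset hfin).symm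
      _ = ↑(F ⟨r - 2, by omega⟩) := by rw [h3]
  · -- uniqueness
    intro s hs
    obtain ⟨⟨hscl, hsmax⟩, hvs⟩ := hs
    have hsG : G.IsClique s := fun x hx y hy hxy => hGle (hscl hx hy hxy)
    have hfin : s.Finite := Set.toFinite s
    obtain ⟨M, hM, hCM⟩ := exists_maximal_clique_ext G hfin.toFinset
      (by rw [Set.Finite.coe_toFinset]; exact hsG)
    obtain ⟨i, hi⟩ := hsurj M hM
    have hsFi : s ⊆ ↑(F i) := fun x hx => by
      rw [Finset.mem_coe, hi]; exact hCM (hfin.mem_toFinset.mpr hx)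
    rcases lt_or_ge (i : ℕ) (r - 1) with h1 | h1
    · have h2 := hsmax ↑(F i) (hClG' i h1) hsFi
      have hvFi : v ∈ F i := by
        have := hvs; rw [← h2] at this; exact Finset.mem_coe.mp this
      rw [← h2, key i h1 hvFi]
    · -- s ⊆ F last, so s = {v} ⊆ F ⟨r-2⟩
      have hieq : i = (⟨r - 1, by omega⟩ : Fin r) := Fin.ext (show (i : ℕ) = r - 1 by have := i.isLt; omega)
      have hsv : s ⊆ {v} := by
        intro x hx
        rcases eq_or_ne x v with rfl | hxv
        · exact Set.mem_singleton_iff.mpr rfl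
        · exfalso
          have hadj := hscl hx hvs hxv
          simp only [skeletonGraph, SimpleGraph.fromRel_adj] at hadj
          obtain ⟨-, hco⟩ := hadj
          have hxL : x ∈ F ⟨r - 1, by omega⟩ := by
            have := hsFi hx; rw [hieq] at this; exact Finset.mem_coe.mp this
          rcases hco with ⟨j, hj, hxj, -⟩ | ⟨j, hj, -, hxj⟩
          · exact hxv (hsub j hj x hxj hxL)
          · exact hxv (hsub j hj x hxj hxL)
      have h2 := hsmax ↑(F ⟨r - 2, by omega⟩) (hClG' _ hr1)
        (hsv.trans (Set.singleton_subset_iff.mpr (Finset.mem_coe.mpr hvprev)))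
      exact h2.symm
end
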